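/- arXiv:1807.04643 — 3 statements merged into one kernel-verified Lean document; each statement's English description precedes it below -/
import Mathlib

section
/- Let A ∈ ℝ^{m×n}, let K ≥ 1 be an integer, and suppose δ ∈ [0,1) satisfies the RIP of order K+1 for A. Let x ∈ ℝⁿ be K-sparse with support Ω = supp(x), and let S ⊊ Ω be any subset with |S| < |Ω| (possibly S = ∅). Then ‖A_{Ω∖S}ᵀ P_S^⊥ A_{Ω∖S} x_{Ω∖S}‖_∞ − ‖A_{Ω^c}ᵀ P_S^⊥ A_{Ω∖S} x_{Ω∖S}‖_∞ ≥ (1 − √(|Ω|−|S|+1)·δ) · ‖x_{Ω∖S}‖₂ / √(|Ω|−|S|). -/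
open Matrix Finset

noncomputable def l2norm {ι : Type*} [Fintype ι] (v : ι → ℝ) : ℝ :=
  Real.sqrt (∑ i, v i ^ 2)

noncomputable def sparseSupport {n : ℕ} (x : Fin n → ℝ) : Finset (Fin n) :=
  Finset.univ.filter (fun i => x i ≠ 0)

def RIP {m n : ℕ} (A : Matrix (Fin m) (Fin n) ℝ) (k : ℕ) (δ : ℝ) : Prop :=
  ∀ x : Fin n → ℝ, (sparseSupport x).card ≤ k →
    (1 - δ) * (∑ i, x i ^ 2) ≤ (∑ i, (A.mulVec x) i ^ 2) ∧
    (∑ i, (A.mulVec x) i ^ 2) ≤ (1 + δ) * (∑ i, x i ^ 2)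

def colSub {m n : ℕ} (A : Matrix (Fin m) (Fin n) ℝ) (S : Finset (Fin n)) :
    Matrix (Fin m) {j // j ∈ S} ℝ :=
  fun i j => A i j.1

noncomputable def projPerp {m n : ℕ} (A : Matrix (Fin m) (Fin n) ℝ) (S : Finset (Fin n)) :
    Matrix (Fin m) (Fin m) ℝ :=
  1 - colSub A S * ((colSub A S)ᵀ * colSub A S)⁻¹ * (colSub A S)ᵀ

def restrictVec {n : ℕ} (x : Fin n → ℝ) (T : Finset (Fin n)) : Fin n → ℝ :=
  fun i => if i ∈ T then x i else 0

noncomputable def supAbs {n : ℕ} (T : Finset (Fin n)) (w : Fin n → ℝ) : ℝ :=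
  sSup ((fun i => |w i|) '' ↑T)

section Aux

variable {m n : ℕ} (A : Matrix (Fin m) (Fin n) ℝ) (S : Finset (Fin n))

/-- extension of a subtype-indexed vector by zero. -/
noncomputable def extendS (y : {j // j ∈ S} → ℝ) : Fin n → ℝ :=
  fun i => if h : i ∈ S then y ⟨i, h⟩ else 0

lemma sum_extendS (f : ℝ → ℝ) (hf : f 0 = 0) (y : {j // j ∈ S} → ℝ) :
    ∑ i, f (extendS S y i) = ∑ j : {j // j ∈ S}, f (y j) := by
  classical
  rw [← Finset.sum_subset (Finset.subset_univ S) (by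
    intro i _ hi
    simp [extendS, dif_neg hi, hf])]
  rw [← Finset.sum_attach S fun i => f (extendS S y i)]
  rw [Finset.univ_eq_attach]
  refine Finset.sum_congr rfl fun j _ => ?_
  simp [extendS, dif_pos j.2]

lemma mulVec_extendS (y : {j // j ∈ S} → ℝ) :
    A.mulVec (extendS S y) = (colSub A S).mulVec y := by
  classical
  funext k
  show ∑ i, A k i * extendS S y i = ∑ j : {j // j ∈ S}, colSub A S k j * y j
  rw [← Finset.sum_subset (Finset.subset_univ S) (by
    intro i _ hi
    simp [extendS, dif_neg hi])]
  rw [← Finset.sum_attach S fun i => A k i * extendS S y i]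
  rw [Finset.univ_eq_attach]
  refine Finset.sum_congr rfl fun j _ => ?_
  simp [extendS, dif_pos j.2, colSub]

end Aux

section Gram

variable {m n : ℕ} {A : Matrix (Fin m) (Fin n) ℝ} {S : Finset (Fin n)} {k : ℕ} {δ : ℝ}

lemma gram_posdef (hRIP : RIP A k δ) (hδ1 : δ < 1) (hScard : S.card ≤ k) :
    ((colSub A S)ᵀ * colSub A S).PosDef := by
  classical
  rw [posDef_iff_dotProduct_mulVec]
  constructor
  · unfold Matrix.IsHermitian
    rw [conjTranspose_eq_transpose_of_trivial, transpose_mul, transpose_transpose]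
  · intro y hy
    have hsupp : sparseSupport (extendS S y) ⊆ S := by
      intro i hi
      simp only [sparseSupport, mem_filter] at hi
      by_contra hiS
      exact hi.2 (by simp [extendS, dif_neg hiS])
    have hcard : (sparseSupport (extendS S y)).card ≤ k :=
      le_trans (Finset.card_le_card hsupp) hScard
    have hrip := (hRIP _ hcard).1
    have hsq : (∑ i, extendS S y i ^ 2) = ∑ j : {j // j ∈ S}, y j ^ 2 :=
      sum_extendS S (fun t => t ^ 2) (by norm_num) y
    have hpos : 0 < ∑ j : {j // j ∈ S}, y j ^ 2 := by
      obtain ⟨j, hj⟩ := Function.ne_iff.mp hy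
      have : 0 < y j ^ 2 := by apply sq_pos_of_ne_zero; exact hj
      exact lt_of_lt_of_le this (Finset.single_le_sum (fun i _ => sq_nonneg (y i)) (mem_univ j))
    have key : star y ⬝ᵥ (((colSub A S)ᵀ * colSub A S) *ᵥ y)
        = ∑ i, (A.mulVec (extendS S y)) i ^ 2 := by
      rw [star_trivial, ← Matrix.mulVec_mulVec, Matrix.dotProduct_mulVec,
        Matrix.vecMul_transpose, mulVec_extendS]
      simp [dotProduct, sq]
    rw [key]
    calc (0:ℝ) < (1 - δ) * ∑ j : {j // j ∈ S}, y j ^ 2 := by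
            apply mul_pos (by linarith) hpos
      _ = (1 - δ) * ∑ i, extendS S y i ^ 2 := by rw [hsq]
      _ ≤ _ := hrip

lemma gram_isUnit (hRIP : RIP A k δ) (hδ1 : δ < 1) (hScard : S.card ≤ k) :
    IsUnit ((colSub A S)ᵀ * colSub A S) :=
  (gram_posdef hRIP hδ1 hScard).isUnit

end Gram

section Proj

variable {m n : ℕ} (A : Matrix (Fin m) (Fin n) ℝ) (S : Finset (Fin n))

/-- coefficient vector of the projection, as a vector on `Fin n` supported in `S`. -/
noncomputable def projCoef (u : Fin m → ℝ) : Fin n → ℝ :=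
  extendS S ((((colSub A S)ᵀ * colSub A S)⁻¹) *ᵥ ((colSub A S)ᵀ *ᵥ u))

lemma projCoef_eq_zero {i : Fin n} (hi : i ∉ S) (u : Fin m → ℝ) : projCoef A S u i = 0 := by
  simp [projCoef, extendS, dif_neg hi]

lemma projPerp_mulVec (u : Fin m → ℝ) :
    (projPerp A S) *ᵥ u = u - A *ᵥ (projCoef A S u) := by
  rw [projPerp, Matrix.sub_mulVec, Matrix.one_mulVec, projCoef, mulVec_extendS,
    ← Matrix.mulVec_mulVec, ← Matrix.mulVec_mulVec]

lemma transpose_projPerp_zero (hG : IsUnit ((colSub A S)ᵀ * colSub A S))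
    (u : Fin m → ℝ) {i : Fin n} (hi : i ∈ S) :
    (Aᵀ *ᵥ ((projPerp A S) *ᵥ u)) i = 0 := by
  have h1 : (Aᵀ *ᵥ ((projPerp A S) *ᵥ u)) i
      = ((colSub A S)ᵀ *ᵥ ((projPerp A S) *ᵥ u)) ⟨i, hi⟩ := by
    simp [Matrix.mulVec, dotProduct, Matrix.transpose_apply, colSub]
  rw [h1, Matrix.mulVec_mulVec]
  have hdet : IsUnit ((colSub A S)ᵀ * colSub A S).det :=
    (Matrix.isUnit_iff_isUnit_det _).mp hG
  have h2 : (colSub A S)ᵀ * (projPerp A S) = 0 := by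
    rw [projPerp, Matrix.mul_sub, Matrix.mul_one]
    rw [show (colSub A S)ᵀ * (colSub A S * ((colSub A S)ᵀ * colSub A S)⁻¹ * (colSub A S)ᵀ)
        = ((colSub A S)ᵀ * colSub A S) * ((colSub A S)ᵀ * colSub A S)⁻¹ * (colSub A S)ᵀ by
      rw [← Matrix.mul_assoc, ← Matrix.mul_assoc]]
    rw [Matrix.mul_nonsing_inv _ hdet, Matrix.one_mul, sub_self]
  rw [h2, Matrix.zero_mulVec, Pi.zero_apply]

end Proj

section QB

variable {m n : ℕ} {A : Matrix (Fin m) (Fin n) ℝ} {S : Finset (Fin n)} {k : ℕ} {δ : ℝ}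

lemma mulVec_dot (M : Matrix (Fin m) (Fin n) ℝ) (c : Fin n → ℝ) (q : Fin m → ℝ) :
    (M *ᵥ c) ⬝ᵥ q = c ⬝ᵥ (Mᵀ *ᵥ q) := by
  calc (M *ᵥ c) ⬝ᵥ q = q ⬝ᵥ (M *ᵥ c) := dotProduct_comm _ _
    _ = (q ᵥ* M) ⬝ᵥ c := Matrix.dotProduct_mulVec _ _ _
    _ = (Mᵀ *ᵥ q) ⬝ᵥ c := by rw [Matrix.mulVec_transpose]
    _ = c ⬝ᵥ (Mᵀ *ᵥ q) := dotProduct_comm _ _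

lemma Bw_eq (A : Matrix (Fin m) (Fin n) ℝ) (S : Finset (Fin n)) (w : Fin n → ℝ) :
    (projPerp A S) *ᵥ (A *ᵥ w) = A *ᵥ (w - projCoef A S (A *ᵥ w)) := by
  rw [projPerp_mulVec, Matrix.mulVec_sub]

lemma qbounds (hRIP : RIP A k δ) (hδ1 : δ < 1)
    (hG : IsUnit ((colSub A S)ᵀ * colSub A S))
    (w : Fin n → ℝ) (hwS : ∀ i ∈ S, w i = 0)
    (hcard : (sparseSupport w ∪ S).card ≤ k) :
    (1 - δ) * (∑ i, w i ^ 2) ≤ (∑ i, ((projPerp A S) *ᵥ (A *ᵥ w)) i ^ 2) ∧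
    (∑ i, ((projPerp A S) *ᵥ (A *ᵥ w)) i ^ 2) ≤ (1 + δ) * (∑ i, w i ^ 2) := by
  classical
  set c := projCoef A S (A *ᵥ w) with hc
  set wt := w - c with hwt
  have hBw : (projPerp A S) *ᵥ (A *ᵥ w) = A *ᵥ wt := Bw_eq A S w
  have hsupp : sparseSupport wt ⊆ sparseSupport w ∪ S := by
    intro i hi
    simp only [sparseSupport, mem_filter, mem_univ, true_and] at hi
    by_contra hiU
    rw [Finset.mem_union] at hiU
    push_neg at hiU
    obtain ⟨h1, h2⟩ := hiU
    have hw0 : w i = 0 := by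
      by_contra h
      exact h1 (by simp [sparseSupport, h])
    have hc0 : c i = 0 := projCoef_eq_zero A S h2 (A *ᵥ w)
    exact hi (by simp [hwt, Pi.sub_apply, hw0, hc0])
  have hwtcard : (sparseSupport wt).card ≤ k :=
    le_trans (Finset.card_le_card hsupp) hcard
  have hwcard : (sparseSupport w).card ≤ k :=
    le_trans (Finset.card_le_card (Finset.subset_union_left)) hcard
  have hsum_le : (∑ i, w i ^ 2) ≤ ∑ i, wt i ^ 2 := by
    apply Finset.sum_le_sum
    intro i _
    by_cases hiS : i ∈ S
    · rw [hwS i hiS]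
      simp [hwt, Pi.sub_apply, hwS i hiS, sq_nonneg]
    · have hc0 : c i = 0 := projCoef_eq_zero A S hiS (A *ᵥ w)
      simp [hwt, Pi.sub_apply, hc0]
  constructor
  · rw [hBw]
    calc (1 - δ) * (∑ i, w i ^ 2) ≤ (1 - δ) * (∑ i, wt i ^ 2) := by
          apply mul_le_mul_of_nonneg_left hsum_le (by linarith)
      _ ≤ _ := (hRIP wt hwtcard).1
  · -- cross term vanishes
    have hcross : (A *ᵥ wt) ⬝ᵥ (A *ᵥ c) = 0 := by
      rw [dotProduct_comm, mulVec_dot]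
      have : ∀ i, c i * (Aᵀ *ᵥ (A *ᵥ wt)) i = 0 := by
        intro i
        by_cases hiS : i ∈ S
        · rw [← hBw, transpose_projPerp_zero A S hG _ hiS, mul_zero]
        · have hc0 : c i = 0 := projCoef_eq_zero A S hiS (A *ᵥ w)
          rw [hc0, zero_mul]
      simp only [dotProduct]
      exact Finset.sum_eq_zero fun i _ => this i
    have hsplit : ∑ i, (A *ᵥ w) i ^ 2
        = (∑ i, (A *ᵥ wt) i ^ 2) + 2 * ((A *ᵥ wt) ⬝ᵥ (A *ᵥ c)) + ∑ i, (A *ᵥ c) i ^ 2 := by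
      have hw : w = wt + c := by funext i; simp [hwt]
      rw [show (A *ᵥ w) = (A *ᵥ wt) + (A *ᵥ c) by rw [← Matrix.mulVec_add, ← hw]]
      simp only [Pi.add_apply, dotProduct]
      rw [Finset.mul_sum, ← Finset.sum_add_distrib, ← Finset.sum_add_distrib]
      exact Finset.sum_congr rfl fun i _ => by ring
    have hAc : (0:ℝ) ≤ ∑ i, (A *ᵥ c) i ^ 2 := Finset.sum_nonneg fun i _ => sq_nonneg _
    have h1 : ∑ i, (A *ᵥ wt) i ^ 2 ≤ ∑ i, (A *ᵥ w) i ^ 2 := by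
      rw [hsplit, hcross]; linarith
    rw [hBw]
    exact le_trans h1 (hRIP w hwcard).2

end QB

section BDot

variable {m n : ℕ}

lemma B_dot (A : Matrix (Fin m) (Fin n) ℝ) (S : Finset (Fin n)) (w : Fin n → ℝ)
    (q : Fin m → ℝ) (hq : ∀ i ∈ S, (Aᵀ *ᵥ q) i = 0) :
    ((projPerp A S) *ᵥ (A *ᵥ w)) ⬝ᵥ q = w ⬝ᵥ (Aᵀ *ᵥ q) := by
  rw [Bw_eq, mulVec_dot, sub_dotProduct]
  have : projCoef A S (A *ᵥ w) ⬝ᵥ (Aᵀ *ᵥ q) = 0 := by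
    apply Finset.sum_eq_zero
    intro i _
    by_cases hiS : i ∈ S
    · rw [hq i hiS, mul_zero]
    · rw [projCoef_eq_zero A S hiS, zero_mul]
  rw [this, sub_zero]

end BDot

/-- Lemma 1: for `S ⊊ Ω = supp(x)`,
`‖A_{Ω∖S}ᵀ P_S^⊥ A_{Ω∖S} x_{Ω∖S}‖_∞ − ‖A_{Ω^c}ᵀ P_S^⊥ A_{Ω∖S} x_{Ω∖S}‖_∞
  ≥ (1 − √(|Ω|−|S|+1)·δ) ‖x_{Ω∖S}‖₂ / √(|Ω|−|S|)`. -/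
theorem omp_lemma_main {m n : ℕ} (A : Matrix (Fin m) (Fin n) ℝ) (K : ℕ) (hK : 1 ≤ K)
    (δ : ℝ) (hδ0 : 0 ≤ δ) (hδ1 : δ < 1) (hRIP : RIP A (K + 1) δ)
    (x : Fin n → ℝ) (hx : (sparseSupport x).card ≤ K)
    (S : Finset (Fin n)) (hS : S ⊆ sparseSupport x)
    (hcard : S.card < (sparseSupport x).card) :
    supAbs (sparseSupport x \ S)
        (Aᵀ.mulVec ((projPerp A S).mulVec (A.mulVec (restrictVec x (sparseSupport x \ S)))))
      - supAbs ((sparseSupport x)ᶜ)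
        (Aᵀ.mulVec ((projPerp A S).mulVec (A.mulVec (restrictVec x (sparseSupport x \ S)))))
      ≥ (1 - Real.sqrt (((sparseSupport x).card : ℝ) - (S.card : ℝ) + 1) * δ)
          * l2norm (restrictVec x (sparseSupport x \ S))
          / Real.sqrt (((sparseSupport x).card : ℝ) - (S.card : ℝ)) := by
  classical
  set Ω := sparseSupport x with hΩdef
  set T := Ω \ S with hTdef
  set v := restrictVec x T with hvdef
  set z := (projPerp A S) *ᵥ (A *ᵥ v) with hzdef
  set g := Aᵀ *ᵥ z with hgdef
  set M := supAbs T g with hMdef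
  set N := supAbs Ωᶜ g with hNdef
  -- basic numerology
  have hTcardNat : T.card = Ω.card - S.card := Finset.card_sdiff_of_subset hS
  have hrpos : 0 < T.card := by
    rw [hTcardNat]; omega
  have hcast : ((Ω.card : ℝ) - (S.card : ℝ)) = (T.card : ℝ) := by
    rw [hTcardNat]
    push_cast [Nat.cast_sub (le_of_lt hcard)]
    ring
  set r : ℕ := T.card with hrdef
  set ρ := Real.sqrt (r : ℝ) with hρdef
  set s := Real.sqrt ((r : ℝ) + 1) with hsdef
  have hρpos : 0 < ρ := Real.sqrt_pos.mpr (by exact_mod_cast hrpos)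
  have hρ2 : ρ ^ 2 = (r : ℝ) := Real.sq_sqrt (by positivity)
  have hs2 : s ^ 2 = (r : ℝ) + 1 := Real.sq_sqrt (by positivity)
  have hs1 : 1 ≤ s := by
    have h : (1:ℝ) ≤ (r:ℝ) + 1 := by linarith [show (0:ℝ) ≤ (r:ℝ) from Nat.cast_nonneg r]
    calc (1:ℝ) = Real.sqrt 1 := by simp
      _ ≤ Real.sqrt ((r:ℝ) + 1) := Real.sqrt_le_sqrt h
  have hspos : 0 < s := lt_of_lt_of_le one_pos hs1
  -- support facts for v
  have hvT : ∀ i, i ∉ T → v i = 0 := by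
    intro i hi; simp [hvdef, restrictVec, if_neg hi]
  have hvmem : ∀ i ∈ T, v i = x i := by
    intro i hi; simp [hvdef, restrictVec, if_pos hi]
  have hsuppv : sparseSupport v = T := by
    ext i
    simp only [sparseSupport, mem_filter, mem_univ, true_and]
    constructor
    · intro h; by_contra hiT; exact h (hvT i hiT)
    · intro hiT
      rw [hvmem i hiT]
      have : i ∈ Ω := Finset.mem_of_subset sdiff_subset hiT
      simpa [hΩdef, sparseSupport] using this
  set Sv := ∑ i, v i ^ 2 with hSvdef
  have hSvpos : 0 < Sv := by
    obtain ⟨i0, hi0⟩ := Finset.card_pos.mp hrpos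
    have hvi0 : v i0 ≠ 0 := by
      rw [hvmem i0 hi0]
      have : i0 ∈ Ω := Finset.mem_of_subset sdiff_subset hi0
      simpa [hΩdef, sparseSupport] using this
    have h1 : 0 < v i0 ^ 2 := by apply sq_pos_of_ne_zero; exact hvi0
    exact lt_of_lt_of_le h1 (Finset.single_le_sum (fun i _ => sq_nonneg (v i)) (mem_univ i0))
  set L := l2norm v with hLdef
  have hL2 : L ^ 2 = Sv := Real.sq_sqrt (le_of_lt hSvpos)
  have hLpos : 0 < L := Real.sqrt_pos.mpr hSvpos
  -- Gram
  have hScard : S.card ≤ K + 1 := by omega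
  have hG : IsUnit ((colSub A S)ᵀ * colSub A S) := gram_isUnit hRIP hδ1 hScard
  have hgS : ∀ i ∈ S, g i = 0 := by
    intro i hi
    rw [hgdef, hzdef]
    exact transpose_projPerp_zero A S hG _ hi
  have hvS : ∀ i ∈ S, v i = 0 := by
    intro i hi
    exact hvT i (by simp [hTdef, hi])
  -- M bounds |g i| on T, and M ≥ 0
  have hbdd : BddAbove ((fun i => |g i|) '' ↑T) := (T.finite_toSet.image _).bddAbove
  have hMle : ∀ i ∈ T, |g i| ≤ M := by
    intro i hi
    exact le_csSup hbdd ⟨i, by simpa using hi, rfl⟩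
  have hMnonneg : 0 ≤ M := by
    obtain ⟨i0, hi0⟩ := Finset.card_pos.mp hrpos
    exact le_trans (abs_nonneg _) (hMle i0 hi0)
  -- E1 : v ⬝ᵥ g ≤ ρ * L * M
  have hSvT : ∑ i ∈ T, v i ^ 2 = Sv := by
    rw [hSvdef]
    apply Finset.sum_subset (Finset.subset_univ T)
    intro i _ hi
    rw [hvT i hi]; ring
  have hl1 : ∑ i ∈ T, |v i| ≤ ρ * L := by
    have h1 : (∑ i ∈ T, |v i|) ^ 2 ≤ (T.card : ℝ) * ∑ i ∈ T, |v i| ^ 2 := by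
      exact_mod_cast sq_sum_le_card_mul_sum_sq (s := T) (f := fun i => |v i|)
    have h2 : ∑ i ∈ T, |v i| ^ 2 = Sv := by rw [← hSvT]; exact Finset.sum_congr rfl fun i _ => sq_abs _
    have h3 : (∑ i ∈ T, |v i|) ^ 2 ≤ (r : ℝ) * Sv := by rw [← h2]; exact_mod_cast h1
    have h4 : 0 ≤ ∑ i ∈ T, |v i| := Finset.sum_nonneg fun i _ => abs_nonneg _
    nlinarith [sq_nonneg (∑ i ∈ T, |v i| - ρ * L), sq_nonneg (∑ i ∈ T, |v i| + ρ * L),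
      mul_pos hρpos hLpos]
  have hE1 : v ⬝ᵥ g ≤ ρ * L * M := by
    have h1 : v ⬝ᵥ g = ∑ i ∈ T, v i * g i := by
      rw [dotProduct]
      symm
      apply Finset.sum_subset (Finset.subset_univ T)
      intro i _ hi
      rw [hvT i hi]; ring
    have h2 : ∑ i ∈ T, v i * g i ≤ ∑ i ∈ T, |v i| * M := by
      apply Finset.sum_le_sum
      intro i hi
      calc v i * g i ≤ |v i * g i| := le_abs_self _
        _ = |v i| * |g i| := abs_mul _ _
        _ ≤ |v i| * M := mul_le_mul_of_nonneg_left (hMle i hi) (abs_nonneg _)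
    calc v ⬝ᵥ g ≤ ∑ i ∈ T, |v i| * M := by rw [h1]; exact h2
      _ = (∑ i ∈ T, |v i|) * M := by rw [Finset.sum_mul]
      _ ≤ (ρ * L) * M := mul_le_mul_of_nonneg_right hl1 hMnonneg
  -- E0 : (1-δ) * Sv ≤ v ⬝ᵥ g
  have hTS : T ∪ S = Ω := Finset.sdiff_union_of_subset hS
  have hcardvS : (sparseSupport v ∪ S).card ≤ K + 1 := by
    rw [hsuppv, hTS]; omega
  have hzz : z ⬝ᵥ z = v ⬝ᵥ g := by
    rw [hzdef, B_dot A S v z hgS, hgdef]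
  have hE0 : (1 - δ) * Sv ≤ v ⬝ᵥ g := by
    have hq := (qbounds hRIP hδ1 hG v hvS hcardvS).1
    have : z ⬝ᵥ z = ∑ i, z i ^ 2 := by simp [dotProduct, sq]
    rw [← hzz, this]
    exact hq
  -- E2
  have hE2 : ∀ j, j ∉ Ω → ρ * L * |g j| + (1 - s * δ) * Sv ≤ v ⬝ᵥ g := by
    intro j hj
    have hjT : j ∉ T := fun h => hj (Finset.mem_of_subset sdiff_subset h)
    have hjS : j ∉ S := fun h => hj (hS h)
    have hvj : v j = 0 := hvT j hjT
    set τ : ℝ := if 0 ≤ g j then 1 else -1 with hτdef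
    have hτg : τ * g j = |g j| := by
      rw [hτdef]; split_ifs with h
      · rw [one_mul, abs_of_nonneg h]
      · rw [abs_of_neg (lt_of_not_ge h)]; ring
    have hτ2 : τ ^ 2 = 1 := by rw [hτdef]; split_ifs <;> norm_num
    set e : Fin n → ℝ := fun i => if i = j then 1 else 0 with hedef
    have hee : ∑ i, e i ^ 2 = 1 := by
      rw [hedef]
      rw [show (fun i => (if i = j then (1:ℝ) else 0) ^ 2) = fun i => if i = j then (1:ℝ) else 0 by
        funext i; split_ifs <;> norm_num]
      simp
    have hve : ∀ (w : Fin n → ℝ), ∑ i, w i * e i = w j := by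
      intro w
      rw [hedef]
      rw [show (fun i => w i * (if i = j then (1:ℝ) else 0)) = fun i => if i = j then w i else 0 by
        funext i; split_ifs <;> ring]
      simp
    set u₁ : Fin n → ℝ := fun i => v i - ρ * τ * L * e i with hu₁def
    set wp : Fin n → ℝ := fun i => u₁ i + s * v i with hwpdef
    set wm : Fin n → ℝ := fun i => u₁ i - s * v i with hwmdef
    -- vanishing on S
    have heS : ∀ i ∈ S, e i = 0 := by
      intro i hi
      rw [hedef]
      simp only
      rw [if_neg]
      rintro rfl; exact hjS hi
    have hwpS : ∀ i ∈ S, wp i = 0 := by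
      intro i hi; simp [hwpdef, hu₁def, hvS i hi, heS i hi]
    have hwmS : ∀ i ∈ S, wm i = 0 := by
      intro i hi; simp [hwmdef, hu₁def, hvS i hi, heS i hi]
    -- card bounds
    have hsuppsub : ∀ (a b : ℝ), sparseSupport (fun i => a * v i + b * e i) ∪ S ⊆ insert j Ω := by
      intro a b i hi
      rcases Finset.mem_union.mp hi with hi | hi
      · simp only [sparseSupport, mem_filter, mem_univ, true_and] at hi
        by_cases hij : i = j
        · simp [hij]
        · have hei : e i = 0 := by rw [hedef]; simp [hij]
          have : v i ≠ 0 := by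
            intro h0; exact hi (by rw [h0, hei]; ring)
          have : i ∈ T := by by_contra hc; exact this (hvT i hc)
          exact Finset.mem_insert_of_mem (Finset.mem_of_subset sdiff_subset this)
      · exact Finset.mem_insert_of_mem (hS hi)
    have hcardΩ1 : (insert j Ω).card ≤ K + 1 := by
      calc (insert j Ω).card ≤ Ω.card + 1 := Finset.card_insert_le _ _
        _ ≤ K + 1 := by omega
    have hwp_eq : wp = fun i => (1 + s) * v i + (-(ρ * τ * L)) * e i := by
      funext i; rw [hwpdef, hu₁def]; ring
    have hwm_eq : wm = fun i => (1 - s) * v i + (-(ρ * τ * L)) * e i := by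
      funext i; rw [hwmdef, hu₁def]; ring
    have hcardwp : (sparseSupport wp ∪ S).card ≤ K + 1 := by
      refine le_trans (Finset.card_le_card ?_) hcardΩ1
      rw [hwp_eq]; exact hsuppsub _ _
    have hcardwm : (sparseSupport wm ∪ S).card ≤ K + 1 := by
      refine le_trans (Finset.card_le_card ?_) hcardΩ1
      rw [hwm_eq]; exact hsuppsub _ _
    -- sum of squares of wp, wm
    have hsumgen : ∀ (a b : ℝ), ∑ i, (a * v i + b * e i) ^ 2 = a ^ 2 * Sv + b ^ 2 := by
      intro a b
      have expand : ∀ i, (a * v i + b * e i) ^ 2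
          = a ^ 2 * v i ^ 2 + b ^ 2 * e i ^ 2 + (2 * a * b) * (v i * e i) := by
        intro i; ring
      rw [Finset.sum_congr rfl fun i _ => expand i]
      rw [Finset.sum_add_distrib, Finset.sum_add_distrib, ← Finset.mul_sum, ← Finset.mul_sum,
        ← Finset.mul_sum, hee, hve v, hvj]
      rw [hSvdef]; ring
    have hb2 : (-(ρ * τ * L)) ^ 2 = (r : ℝ) * Sv := by
      rw [show (-(ρ * τ * L)) ^ 2 = ρ ^ 2 * τ ^ 2 * L ^ 2 by ring, hρ2, hτ2, hL2]; ring
    have hsumwp : ∑ i, wp i ^ 2 = (2 * ((r:ℝ) + 1) + 2 * s) * Sv := by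
      have h1 : ∑ i, wp i ^ 2 = ∑ i, ((1 + s) * v i + (-(ρ * τ * L)) * e i) ^ 2 :=
        Finset.sum_congr rfl fun i _ => by simp only [hwp_eq]
      rw [h1, hsumgen, hb2]
      linear_combination Sv * hs2
    have hsumwm : ∑ i, wm i ^ 2 = (2 * ((r:ℝ) + 1) - 2 * s) * Sv := by
      have h1 : ∑ i, wm i ^ 2 = ∑ i, ((1 - s) * v i + (-(ρ * τ * L)) * e i) ^ 2 :=
        Finset.sum_congr rfl fun i _ => by simp only [hwm_eq]
      rw [h1, hsumgen, hb2]
      linear_combination Sv * hs2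
    -- qbounds
    have hqp := (qbounds hRIP hδ1 hG wp hwpS hcardwp).1
    have hqm := (qbounds hRIP hδ1 hG wm hwmS hcardwm).2
    -- LHS identity
    set p := (projPerp A S) *ᵥ (A *ᵥ u₁) with hpdef
    have hwp_vec : (fun i => wp i) = u₁ + s • v := by
      funext i; simp [hwpdef, Pi.add_apply, Pi.smul_apply, smul_eq_mul]
    have hwm_vec : (fun i => wm i) = u₁ - s • v := by
      funext i; simp [hwmdef, Pi.sub_apply, Pi.smul_apply, smul_eq_mul]
    have hBwp : (projPerp A S) *ᵥ (A *ᵥ wp) = fun k => p k + s * z k := by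
      have : (A *ᵥ wp) = A *ᵥ u₁ + s • (A *ᵥ v) := by
        rw [show (A *ᵥ wp) = A *ᵥ (u₁ + s • v) by rw [← hwp_vec],
          Matrix.mulVec_add, Matrix.mulVec_smul]
      rw [this, Matrix.mulVec_add, Matrix.mulVec_smul]
      funext k
      simp [hpdef, hzdef, Pi.add_apply, Pi.smul_apply, smul_eq_mul]
    have hBwm : (projPerp A S) *ᵥ (A *ᵥ wm) = fun k => p k - s * z k := by
      have : (A *ᵥ wm) = A *ᵥ u₁ - s • (A *ᵥ v) := by
        rw [show (A *ᵥ wm) = A *ᵥ (u₁ - s • v) by rw [← hwm_vec],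
          Matrix.mulVec_sub, Matrix.mulVec_smul]
      rw [this, Matrix.mulVec_sub, Matrix.mulVec_smul]
      funext k
      simp [hpdef, hzdef, Pi.sub_apply, Pi.smul_apply, smul_eq_mul]
    have hpz : p ⬝ᵥ z = u₁ ⬝ᵥ g := by
      rw [hpdef, B_dot A S u₁ z hgS, hgdef]
    have hu₁g : u₁ ⬝ᵥ g = v ⬝ᵥ g - ρ * L * |g j| := by
      rw [dotProduct]
      have : ∀ i, u₁ i * g i = v i * g i - (ρ * τ * L) * (g i * e i) := by
        intro i; rw [hu₁def]; ring
      rw [Finset.sum_congr rfl fun i _ => this i, Finset.sum_sub_distrib, ← Finset.mul_sum,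
        hve g]
      rw [dotProduct]
      have : ρ * τ * L * g j = ρ * L * |g j| := by rw [← hτg]; ring
      rw [this]
    have hdiff : (∑ i, ((projPerp A S) *ᵥ (A *ᵥ wp)) i ^ 2)
        - (∑ i, ((projPerp A S) *ᵥ (A *ᵥ wm)) i ^ 2)
        = 4 * s * (v ⬝ᵥ g - ρ * L * |g j|) := by
      rw [hBwp, hBwm, ← Finset.sum_sub_distrib]
      have : ∀ k, (p k + s * z k) ^ 2 - (p k - s * z k) ^ 2 = 4 * s * (p k * z k) := by
        intro k; ring
      rw [Finset.sum_congr rfl fun k _ => this k, ← Finset.mul_sum]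
      rw [show (∑ k, p k * z k) = p ⬝ᵥ z from rfl, hpz, hu₁g]
    -- combine
    have hcomb : 4 * s * (v ⬝ᵥ g - ρ * L * |g j|)
        ≥ (1 - δ) * ((2 * ((r:ℝ) + 1) + 2 * s) * Sv)
          - (1 + δ) * ((2 * ((r:ℝ) + 1) - 2 * s) * Sv) := by
      rw [← hdiff, ← hsumwp, ← hsumwm]
      have := hqm
      linarith [hqp, hqm]
    have hrhs : (1 - δ) * ((2 * ((r:ℝ) + 1) + 2 * s) * Sv)
          - (1 + δ) * ((2 * ((r:ℝ) + 1) - 2 * s) * Sv)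
        = 4 * s * ((1 - s * δ) * Sv) := by
      linear_combination (4 * δ * Sv) * hs2
    rw [hrhs] at hcomb
    have h4s : (0:ℝ) < 4 * s := by linarith
    have h5 := le_of_mul_le_mul_left hcomb h4s
    linarith
  -- final assembly
  have hcast1 : Real.sqrt (((Ω.card : ℝ) - (S.card : ℝ)) + 1) = s := by rw [hcast, hsdef]
  have hcast2 : Real.sqrt ((Ω.card : ℝ) - (S.card : ℝ)) = ρ := by rw [hcast, hρdef]
  rw [hcast1, hcast2]
  set c0 := (1 - s * δ) * L / ρ with hc0def
  have hρne : ρ ≠ 0 := ne_of_gt hρpos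
  have hLL : L * L = Sv := by rw [← hL2]; ring
  have hkey : c0 * (ρ * L) = (1 - s * δ) * Sv := by
    calc c0 * (ρ * L) = (1 - s * δ) * (L * L) * (ρ / ρ) := by rw [hc0def]; ring
      _ = (1 - s * δ) * Sv := by rw [div_self hρne, mul_one, hLL]
  have hρL : (0:ℝ) < ρ * L := mul_pos hρpos hLpos
  by_cases hne : (Ωᶜ : Finset (Fin n)).Nonempty
  · have hNle : N ≤ M - c0 := by
      rw [hNdef, supAbs]
      apply csSup_le
      · obtain ⟨j0, hj0⟩ := hne
        exact ⟨|g j0|, ⟨j0, by simpa using hj0, rfl⟩⟩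
      · rintro y ⟨j, hj, rfl⟩
        have hjΩ : j ∉ Ω := by simpa using hj
        have h2 := hE2 j hjΩ
        have h3 : ρ * L * |g j| ≤ ρ * L * M - (1 - s * δ) * Sv := by linarith [hE1]
        have h4 : |g j| * (ρ * L) ≤ (M - c0) * (ρ * L) := by
          rw [sub_mul, hkey]  -- (M - c0)*(ρL) = M*(ρL) - (1-sδ)*Sv
          calc |g j| * (ρ * L) = ρ * L * |g j| := by ring
            _ ≤ ρ * L * M - (1 - s * δ) * Sv := h3
            _ = M * (ρ * L) - (1 - s * δ) * Sv := by ring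
        exact le_of_mul_le_mul_right h4 hρL
    linarith [hNle]
  · have hN0 : N = 0 := by
      rw [hNdef, supAbs]
      rw [Finset.not_nonempty_iff_eq_empty.mp hne]
      simp [Real.sSup_empty]
    rw [hN0, sub_zero]
    have h1 : (1 - s * δ) * Sv ≤ (1 - δ) * Sv := by
      have hd : δ ≤ s * δ := le_mul_of_one_le_left hδ0 hs1
      exact mul_le_mul_of_nonneg_right (by linarith) (le_of_lt hSvpos)
    have h2 : c0 * (ρ * L) ≤ M * (ρ * L) := by
      rw [hkey]
      calc (1 - s * δ) * Sv ≤ (1 - δ) * Sv := h1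
        _ ≤ v ⬝ᵥ g := hE0
        _ ≤ ρ * L * M := hE1
        _ = M * (ρ * L) := by ring
    exact le_of_mul_le_mul_right h2 hρL
end

section
/- Let y = Ax + v, where A ∈ ℝ^{m×n}, x ∈ ℝⁿ is K-sparse with nonempty support Ω = supp(x), and ‖v‖₂ ≤ ε. Suppose δ ∈ [0,1) satisfies the RIP of order K+1 for A with δ < 1/√(K+1), and suppose min_{i∈Ω}|x_i| > 2ε/(1 − √(K+1)·δ). Consider any sequence produced by the OMP algorithm: S₀ = ∅, r⁰ = y, and for k ≥ 1, s^k is any index maximizing |⟨r^{k−1}, A_i⟩| over 1 ≤ i ≤ n, S_k = S_{k−1} ∪ {s^k}, and r^k = P_{S_k}^⊥ y. Then ‖r^k‖₂ > ε for every 0 ≤ k < |Ω|, S_{|Ω|} = Ω, and ‖r^{|Ω|}‖₂ ≤ ε; that is, OMP with stopping criterion ‖r^k‖₂ ≤ ε performs exactly |Ω| iterations and exactly recovers the support Ω of x. -/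
open Matrix Finset

namespace OMPAux


lemma sum_sq_nonneg {ι : Type*} [Fintype ι] (f : ι → ℝ) : 0 ≤ ∑ i, f i ^ 2 :=
  Finset.sum_nonneg fun _ _ => sq_nonneg _

lemma l2norm_nonneg {ι : Type*} [Fintype ι] (f : ι → ℝ) : 0 ≤ l2norm f :=
  Real.sqrt_nonneg _

lemma l2norm_sq {ι : Type*} [Fintype ι] (f : ι → ℝ) : l2norm f ^ 2 = ∑ i, f i ^ 2 :=
  Real.sq_sqrt (sum_sq_nonneg f)

lemma dot_le_l2 {ι : Type*} [Fintype ι] (f g : ι → ℝ) :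
    ∑ i, f i * g i ≤ l2norm f * l2norm g :=
  Real.sum_mul_le_sqrt_mul_sqrt Finset.univ f g

lemma abs_dot_le_l2 {ι : Type*} [Fintype ι] (f g : ι → ℝ) :
    |∑ i, f i * g i| ≤ l2norm f * l2norm g := by
  rcases abs_cases (∑ i, f i * g i) with ⟨h, _⟩ | ⟨h, _⟩
  · rw [h]; exact dot_le_l2 f g
  · rw [h]
    have := dot_le_l2 (fun i => -f i) g
    have hl : l2norm (fun i => -f i) = l2norm f := by
      unfold l2norm; congr 1; apply Finset.sum_congr rfl; intro i _; ring
    rw [hl] at this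
    calc -∑ i, f i * g i = ∑ i, (-f i) * g i := by rw [← Finset.sum_neg_distrib]; apply Finset.sum_congr rfl; intros; ring
    _ ≤ l2norm f * l2norm g := this

lemma l2norm_le_of_sq_le {ι : Type*} [Fintype ι] {f : ι → ℝ} {c : ℝ} (hc : 0 ≤ c)
    (h : ∑ i, f i ^ 2 ≤ c ^ 2) : l2norm f ≤ c := by
  have := Real.sqrt_le_sqrt h
  rwa [Real.sqrt_sq hc] at this

lemma l2norm_add_le {ι : Type*} [Fintype ι] (f g : ι → ℝ) :
    l2norm (f + g) ≤ l2norm f + l2norm g := by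
  apply l2norm_le_of_sq_le (add_nonneg (l2norm_nonneg f) (l2norm_nonneg g))
  have expand : ∑ i, (f + g) i ^ 2 = (∑ i, f i ^ 2) + 2 * (∑ i, f i * g i) + ∑ i, g i ^ 2 := by
    rw [Finset.mul_sum, ← Finset.sum_add_distrib, ← Finset.sum_add_distrib]
    apply Finset.sum_congr rfl; intro i _; simp only [Pi.add_apply]; ring
  have hcs := dot_le_l2 f g
  have h1 := l2norm_sq f; have h2 := l2norm_sq g
  rw [expand]; nlinarith [l2norm_nonneg f, l2norm_nonneg g]



lemma mem_sparseSupport {n : ℕ} {x : Fin n → ℝ} {i : Fin n} :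
    i ∈ sparseSupport x ↔ x i ≠ 0 := by
  simp [sparseSupport]

lemma not_mem_sparseSupport {n : ℕ} {x : Fin n → ℝ} {i : Fin n} (h : i ∉ sparseSupport x) :
    x i = 0 := by
  by_contra hne; exact h (mem_sparseSupport.2 hne)

lemma supp_restrict {n : ℕ} (x : Fin n → ℝ) (T : Finset (Fin n)) :
    sparseSupport (restrictVec x T) ⊆ T := by
  intro i hi
  have := mem_sparseSupport.1 hi
  by_contra hiT
  exact this (if_neg hiT)

lemma supp_add_subset {n : ℕ} (f g : Fin n → ℝ) :
    sparseSupport (f + g) ⊆ sparseSupport f ∪ sparseSupport g := by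
  intro i hi
  have h := mem_sparseSupport.1 hi
  rw [Finset.mem_union, mem_sparseSupport, mem_sparseSupport]
  by_contra hc; push_neg at hc
  exact h (by simp [Pi.add_apply, hc.1, hc.2])

lemma supp_sub_subset {n : ℕ} (f g : Fin n → ℝ) :
    sparseSupport (f - g) ⊆ sparseSupport f ∪ sparseSupport g := by
  intro i hi
  have h := mem_sparseSupport.1 hi
  rw [Finset.mem_union, mem_sparseSupport, mem_sparseSupport]
  by_contra hc; push_neg at hc
  exact h (by simp [Pi.sub_apply, hc.1, hc.2])

lemma supp_smul_subset {n : ℕ} (c : ℝ) (f : Fin n → ℝ) :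
    sparseSupport (c • f) ⊆ sparseSupport f := by
  intro i hi
  have h := mem_sparseSupport.1 hi
  rw [mem_sparseSupport]
  by_contra hc
  exact h (by simp [Pi.smul_apply, hc])

/-- sum of squares over the whole type equals the sum over any superset of the support -/
lemma sum_sq_eq_sum_supp {n : ℕ} (f : Fin n → ℝ) (U : Finset (Fin n))
    (h : sparseSupport f ⊆ U) : ∑ i, f i ^ 2 = ∑ i ∈ U, f i ^ 2 := by
  symm
  apply Finset.sum_subset (Finset.subset_univ U)
  intro i _ hiU
  have : f i = 0 := not_mem_sparseSupport (fun hs => hiU (h hs))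
  rw [this]; ring

/-- The key combinatorial core lemma. -/
lemma core {n : ℕ} (T : Finset (Fin n)) (hT : T.Nonempty) (x w : Fin n → ℝ) (b D : ℝ)
    (hb : 0 ≤ b) (hD : 0 ≤ D)
    (hsum : b ^ 2 + ∑ l ∈ T, (w l - x l) ^ 2 ≤ D ^ 2)
    (hstrict : Real.sqrt ((T.card : ℝ) + 1) * D < Real.sqrt (∑ l ∈ T, x l ^ 2)) :
    ∃ j ∈ T, b < |w j| := by
  by_contra hcon
  push_neg at hcon
  set a := ∑ l ∈ T, x l ^ 2 with ha_def
  set L := (T.card : ℝ) with hL_def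
  have hL1 : 1 ≤ L := by
    have h := Finset.card_pos.2 hT
    rw [hL_def]
    exact_mod_cast h
  have hL0 : (0:ℝ) ≤ L := by linarith
  have ha0 : 0 ≤ a := Finset.sum_nonneg fun _ _ => sq_nonneg _
  have hΔ0 : 0 ≤ ∑ l ∈ T, (w l - x l) ^ 2 := Finset.sum_nonneg fun _ _ => sq_nonneg _
  have hbD : b ≤ D := by nlinarith
  have hΔD : ∑ l ∈ T, (w l - x l) ^ 2 ≤ D ^ 2 - b ^ 2 := by linarith
  -- h1 : a - b * ∑ |x l| ≤ ∑ |x l| * |w l - x l|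
  have h1 : a - b * ∑ l ∈ T, |x l| ≤ ∑ l ∈ T, |x l| * |w l - x l| := by
    have : ∀ l ∈ T, |x l| * |x l| - |x l| * b ≤ |x l| * |w l - x l| := by
      intro l hl
      have h1' : |x l| - b ≤ |w l - x l| := by
        have := abs_sub_abs_le_abs_sub (x l) (w l)
        have h2' := hcon l hl
        rw [abs_sub_comm] at this
        linarith
      nlinarith [abs_nonneg (x l)]
    calc a - b * ∑ l ∈ T, |x l| = ∑ l ∈ T, (|x l| * |x l| - |x l| * b) := by
          rw [Finset.sum_sub_distrib, ← Finset.sum_mul, ha_def]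
          congr 1
          · apply Finset.sum_congr rfl; intro l _; rw [← sq_abs (x l), sq]
          · ring
      _ ≤ ∑ l ∈ T, |x l| * |w l - x l| := Finset.sum_le_sum this
  -- h2 : Cauchy-Schwarz
  have h2 : ∑ l ∈ T, |x l| * |w l - x l| ≤ Real.sqrt a * Real.sqrt (D ^ 2 - b ^ 2) := by
    have hcs := Real.sum_mul_le_sqrt_mul_sqrt T (fun l => |x l|) (fun l => |w l - x l|)
    simp only [sq_abs] at hcs
    calc ∑ l ∈ T, |x l| * |w l - x l| ≤ Real.sqrt a * Real.sqrt (∑ l ∈ T, (w l - x l) ^ 2) := hcs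
      _ ≤ Real.sqrt a * Real.sqrt (D ^ 2 - b ^ 2) :=
          mul_le_mul_of_nonneg_left (Real.sqrt_le_sqrt hΔD) (Real.sqrt_nonneg a)
  -- h3 : ∑ |x l| ≤ √L * √a
  have h3 : ∑ l ∈ T, |x l| ≤ Real.sqrt L * Real.sqrt a := by
    have hcs := Real.sum_mul_le_sqrt_mul_sqrt T (fun _ => (1:ℝ)) (fun l => |x l|)
    simp only [one_mul, one_pow, sq_abs] at hcs
    rw [Finset.sum_const, nsmul_eq_mul, mul_one] at hcs
    exact hcs
  have hsa := Real.sq_sqrt ha0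
  have hsa_nn := Real.sqrt_nonneg a
  have hsL := Real.sq_sqrt hL0
  have hsL_nn := Real.sqrt_nonneg L
  have hsL1 := Real.sq_sqrt (by linarith : (0:ℝ) ≤ L + 1)
  have hsL1_nn := Real.sqrt_nonneg (L + 1)
  have hsDb := Real.sq_sqrt (by linarith : (0:ℝ) ≤ D ^ 2 - b ^ 2)
  have hsDb_nn := Real.sqrt_nonneg (D ^ 2 - b ^ 2)
  -- √a > √(L+1) D ≥ 0 so √a > 0
  have hsa_pos : 0 < Real.sqrt a :=
    lt_of_le_of_lt (mul_nonneg hsL1_nn hD) hstrict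
  -- key : a - b * (√L * √a) ≤ √a * √(D²-b²)
  have key : a - b * (Real.sqrt L * Real.sqrt a) ≤ Real.sqrt a * Real.sqrt (D ^ 2 - b ^ 2) := by
    have : a - b * ∑ l ∈ T, |x l| ≤ Real.sqrt a * Real.sqrt (D ^ 2 - b ^ 2) := le_trans h1 h2
    have hmono : b * ∑ l ∈ T, |x l| ≤ b * (Real.sqrt L * Real.sqrt a) :=
      mul_le_mul_of_nonneg_left h3 hb
    linarith
  -- divide by √a : √a - b √L ≤ √(D²-b²)
  have key2 : Real.sqrt a - Real.sqrt L * b ≤ Real.sqrt (D ^ 2 - b ^ 2) := by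
    nlinarith [key, hsa_pos, hsa]
  -- strict lower bound on RHS
  have h5 : Real.sqrt (L + 1) * D - Real.sqrt L * b < Real.sqrt (D ^ 2 - b ^ 2) := by
    linarith [hstrict]
  have hsLle : Real.sqrt L ≤ Real.sqrt (L + 1) := Real.sqrt_le_sqrt (by linarith)
  have h6 : 0 ≤ Real.sqrt (L + 1) * D - Real.sqrt L * b := by nlinarith
  have h7 : (Real.sqrt (L + 1) * D - Real.sqrt L * b) ^ 2 < D ^ 2 - b ^ 2 := by
    calc (Real.sqrt (L + 1) * D - Real.sqrt L * b) ^ 2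
        < Real.sqrt (D ^ 2 - b ^ 2) ^ 2 := by
          apply pow_lt_pow_left₀ h5 h6
          norm_num
      _ = D ^ 2 - b ^ 2 := hsDb
  nlinarith [sq_nonneg (Real.sqrt L * D - Real.sqrt (L + 1) * b), h7]



/-- extension of a subtype-indexed vector by zero -/
def extendS {n : ℕ} (S : Finset (Fin n)) (u : {j // j ∈ S} → ℝ) : Fin n → ℝ :=
  fun j => if h : j ∈ S then u ⟨j, h⟩ else 0

lemma supp_extendS {n : ℕ} (S : Finset (Fin n)) (u : {j // j ∈ S} → ℝ) :
    sparseSupport (extendS S u) ⊆ S := by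
  intro i hi
  have := mem_sparseSupport.1 hi
  by_contra hiS
  exact this (dif_neg hiS)

lemma colSub_mulVec {m n : ℕ} (A : Matrix (Fin m) (Fin n) ℝ) (S : Finset (Fin n))
    (u : {j // j ∈ S} → ℝ) :
    (colSub A S).mulVec u = A.mulVec (extendS S u) := by
  funext i
  show ∑ j : {j // j ∈ S}, colSub A S i j * u j = ∑ j : Fin n, A i j * extendS S u j
  rw [Finset.univ_eq_attach]
  have h1 : ∑ j ∈ S.attach, colSub A S i j * u j = ∑ j ∈ S, A i j * extendS S u j := by
    rw [← Finset.sum_attach S (fun j => A i j * extendS S u j)]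
    apply Finset.sum_congr rfl
    intro j _
    simp [colSub, extendS, j.2]
  rw [h1]
  apply Finset.sum_subset (Finset.subset_univ S)
  intro j _ hjS
  rw [show extendS S u j = 0 from dif_neg hjS]
  ring

lemma sum_sq_extendS {n : ℕ} (S : Finset (Fin n)) (u : {j // j ∈ S} → ℝ) :
    ∑ j, extendS S u j ^ 2 = ∑ j, u j ^ 2 := by
  rw [Finset.univ_eq_attach]
  have h1 : ∑ j ∈ S.attach, u j ^ 2 = ∑ j ∈ S, extendS S u j ^ 2 := by
    rw [← Finset.sum_attach S (fun j => extendS S u j ^ 2)]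
    apply Finset.sum_congr rfl
    intro j _
    simp [extendS, j.2]
  rw [h1]
  symm
  apply Finset.sum_subset (Finset.subset_univ S)
  intro j _ hjS
  rw [show extendS S u j = 0 from dif_neg hjS]
  ring

section Proj

variable {m n : ℕ} (A : Matrix (Fin m) (Fin n) ℝ) (S : Finset (Fin n))

lemma projPerp_transpose : (projPerp A S)ᵀ = projPerp A S := by
  unfold projPerp
  rw [transpose_sub, transpose_one, transpose_mul, transpose_mul, transpose_transpose,
    transpose_nonsing_inv, transpose_mul, transpose_transpose, Matrix.mul_assoc]

lemma projPerp_mul_colSub (hdet : IsUnit ((colSub A S)ᵀ * colSub A S).det) :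
    projPerp A S * colSub A S = 0 := by
  unfold projPerp
  rw [Matrix.sub_mul, Matrix.one_mul, Matrix.mul_assoc (colSub A S * ((colSub A S)ᵀ * colSub A S)⁻¹),
    Matrix.mul_assoc, Matrix.nonsing_inv_mul _ hdet, Matrix.mul_one, sub_self]

lemma projPerp_idem (hdet : IsUnit ((colSub A S)ᵀ * colSub A S).det) :
    projPerp A S * projPerp A S = projPerp A S := by
  have h := projPerp_mul_colSub A S hdet
  have e1 : projPerp A S * projPerp A S = projPerp A S * 1 -
      projPerp A S * (colSub A S * ((colSub A S)ᵀ * colSub A S)⁻¹ * (colSub A S)ᵀ) := by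
    rw [← Matrix.mul_sub]
    rfl
  rw [e1, Matrix.mul_one, ← Matrix.mul_assoc, ← Matrix.mul_assoc, h, Matrix.zero_mul,
    Matrix.zero_mul, sub_zero]

lemma dot_projPerp_comm (u w : Fin m → ℝ) :
    (projPerp A S).mulVec u ⬝ᵥ w = u ⬝ᵥ (projPerp A S).mulVec w := by
  conv_lhs => rw [show (projPerp A S).mulVec u = ((projPerp A S)ᵀ)ᵀ.mulVec u by rw [transpose_transpose]]
  rw [Matrix.mulVec_transpose, ← Matrix.dotProduct_mulVec, projPerp_transpose]

lemma projPerp_mulVec_A_eq_zero (hdet : IsUnit ((colSub A S)ᵀ * colSub A S).det)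
    (z : Fin n → ℝ) (hz : sparseSupport z ⊆ S) :
    (projPerp A S).mulVec (A.mulVec z) = 0 := by
  have hze : extendS S (fun j : {j // j ∈ S} => z j.1) = z := by
    funext j
    by_cases hj : j ∈ S
    · simp [extendS, hj]
    · have h0 : z j = 0 := by
        by_contra hne
        exact hj (hz (mem_sparseSupport.2 hne))
      simp [extendS, hj, h0]
  have hz' : A.mulVec z = (colSub A S).mulVec (fun j => z j.1) := by
    rw [colSub_mulVec, hze]
  rw [hz', Matrix.mulVec_mulVec, projPerp_mul_colSub A S hdet, Matrix.zero_mulVec]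

lemma projPerp_repr (z : Fin n → ℝ) :
    ∃ g : Fin n → ℝ, sparseSupport g ⊆ S ∧
      (projPerp A S).mulVec (A.mulVec z) = A.mulVec z - A.mulVec g := by
  refine ⟨extendS S ((((colSub A S)ᵀ * colSub A S)⁻¹ * (colSub A S)ᵀ).mulVec (A.mulVec z)),
    supp_extendS _ _, ?_⟩
  rw [← colSub_mulVec]
  unfold projPerp
  rw [Matrix.sub_mulVec, Matrix.one_mulVec, Matrix.mul_assoc, ← Matrix.mulVec_mulVec]

lemma projPerp_contract (hdet : IsUnit ((colSub A S)ᵀ * colSub A S).det) (u : Fin m → ℝ) :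
    ∑ i, ((projPerp A S).mulVec u) i ^ 2 ≤ ∑ i, u i ^ 2 := by
  have h1 : ∑ i, ((projPerp A S).mulVec u) i ^ 2
      = ((projPerp A S).mulVec u) ⬝ᵥ ((projPerp A S).mulVec u) := by
    simp [dotProduct, pow_two]
  have h2 : ((projPerp A S).mulVec u) ⬝ᵥ ((projPerp A S).mulVec u)
      = u ⬝ᵥ ((projPerp A S).mulVec u) := by
    rw [dot_projPerp_comm, Matrix.mulVec_mulVec, projPerp_idem A S hdet]
  have h3 : u ⬝ᵥ ((projPerp A S).mulVec u)
      ≤ Real.sqrt (∑ i, u i ^ 2) * Real.sqrt (∑ i, ((projPerp A S).mulVec u) i ^ 2) :=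
    Real.sum_mul_le_sqrt_mul_sqrt Finset.univ u ((projPerp A S).mulVec u)
  have h4 : Real.sqrt (∑ i, u i ^ 2) ^ 2 = ∑ i, u i ^ 2 :=
    Real.sq_sqrt (Finset.sum_nonneg fun i _ => sq_nonneg (u i))
  have h5 : Real.sqrt (∑ i, ((projPerp A S).mulVec u) i ^ 2) ^ 2
      = ∑ i, ((projPerp A S).mulVec u) i ^ 2 :=
    Real.sq_sqrt (Finset.sum_nonneg fun i _ => sq_nonneg _)
  nlinarith [Real.sqrt_nonneg (∑ i, u i ^ 2),
    Real.sqrt_nonneg (∑ i, ((projPerp A S).mulVec u) i ^ 2),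
    sq_nonneg (Real.sqrt (∑ i, u i ^ 2) - Real.sqrt (∑ i, ((projPerp A S).mulVec u) i ^ 2))]

lemma gram_det {k : ℕ} {δ : ℝ} (hRIP : RIP A k δ) (hδlt1 : δ < 1)
    (hS : S.card ≤ k) : IsUnit ((colSub A S)ᵀ * colSub A S).det := by
  rw [isUnit_iff_ne_zero]
  intro hdet0
  obtain ⟨vv, hvv0, hvv⟩ := Matrix.exists_mulVec_eq_zero_iff.2 hdet0
  have h1 : vv ⬝ᵥ (((colSub A S)ᵀ * colSub A S).mulVec vv) = 0 := by rw [hvv]; simp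
  have h2 : vv ⬝ᵥ (((colSub A S)ᵀ * colSub A S).mulVec vv)
      = ((colSub A S).mulVec vv) ⬝ᵥ ((colSub A S).mulVec vv) := by
    rw [← Matrix.mulVec_mulVec, Matrix.dotProduct_mulVec, Matrix.vecMul_transpose]
  have h3 : (colSub A S).mulVec vv = A.mulVec (extendS S vv) := colSub_mulVec A S vv
  have hsupp : (sparseSupport (extendS S vv)).card ≤ k :=
    le_trans (Finset.card_le_card (supp_extendS S vv)) hS
  have hrip := (hRIP (extendS S vv) hsupp).1
  have h4 : ∑ i, (A.mulVec (extendS S vv)) i ^ 2 = 0 := by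
    rw [← h3]
    have : ((colSub A S).mulVec vv) ⬝ᵥ ((colSub A S).mulVec vv)
        = ∑ i, ((colSub A S).mulVec vv) i ^ 2 := by simp [dotProduct, sq]
    rw [← this, ← h2, h1]
  have h5 : ∑ j, extendS S vv j ^ 2 = ∑ j, vv j ^ 2 := sum_sq_extendS S vv
  have h6 : 0 < ∑ j, vv j ^ 2 := by
    have hne : ∃ j, vv j ≠ 0 := Function.ne_iff.1 hvv0
    obtain ⟨j, hj⟩ := hne
    have : 0 < vv j ^ 2 := by positivity
    calc (0:ℝ) < vv j ^ 2 := this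
      _ ≤ ∑ j, vv j ^ 2 := Finset.single_le_sum (fun i _ => sq_nonneg (vv i)) (Finset.mem_univ j)
  rw [h4] at hrip
  rw [h5] at hrip
  nlinarith

end Proj



lemma sum_sq_add {ι : Type*} [Fintype ι] (f g : ι → ℝ) :
    ∑ i, (f + g) i ^ 2 = ∑ i, f i ^ 2 + 2 * ∑ i, f i * g i + ∑ i, g i ^ 2 := by
  rw [Finset.mul_sum, ← Finset.sum_add_distrib, ← Finset.sum_add_distrib]
  apply Finset.sum_congr rfl; intro i _; simp only [Pi.add_apply]; ring

lemma sum_sq_sub {ι : Type*} [Fintype ι] (f g : ι → ℝ) :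
    ∑ i, (f - g) i ^ 2 = ∑ i, f i ^ 2 - 2 * ∑ i, f i * g i + ∑ i, g i ^ 2 := by
  rw [Finset.mul_sum, ← Finset.sum_sub_distrib, ← Finset.sum_add_distrib]
  apply Finset.sum_congr rfl; intro i _; simp only [Pi.sub_apply]; ring

lemma eq_zero_of_sum_sq_eq_zero {ι : Type*} [Fintype ι] {f : ι → ℝ}
    (h : ∑ i, f i ^ 2 = 0) : f = 0 := by
  funext i
  have := (Finset.sum_eq_zero_iff_of_nonneg (fun j _ => sq_nonneg (f j))).1 h i (Finset.mem_univ i)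
  exact pow_eq_zero_iff (by norm_num) |>.1 this

/-- Polarization / approximate orthogonality bound. -/
lemma polar {m n : ℕ} (B : Matrix (Fin m) (Fin n) ℝ) (V : Finset (Fin n)) (δ : ℝ) (hδ0 : 0 ≤ δ)
    (Hlow : ∀ z : Fin n → ℝ, sparseSupport z ⊆ V →
      (1 - δ) * ∑ j, z j ^ 2 ≤ ∑ i, (B.mulVec z) i ^ 2)
    (Hup : ∀ z : Fin n → ℝ, sparseSupport z ⊆ V →
      ∑ i, (B.mulVec z) i ^ 2 ≤ (1 + δ) * ∑ j, z j ^ 2)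
    (z w : Fin n → ℝ) (hz : sparseSupport z ⊆ V) (hw : sparseSupport w ⊆ V) :
    |∑ i, (B.mulVec z) i * (B.mulVec w) i - ∑ j, z j * w j|
      ≤ δ * Real.sqrt (∑ j, z j ^ 2) * Real.sqrt (∑ j, w j ^ 2) := by
  -- Step 1 : unscaled bound
  have step1 : ∀ p q : Fin n → ℝ, sparseSupport p ⊆ V → sparseSupport q ⊆ V →
      ∑ i, (B.mulVec p) i * (B.mulVec q) i - ∑ j, p j * q j
        ≤ δ * (∑ j, p j ^ 2 + ∑ j, q j ^ 2) / 2 := by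
    intro p q hp hq
    have hpq : sparseSupport (p + q) ⊆ V :=
      subset_trans (supp_add_subset p q) (Finset.union_subset hp hq)
    have hmq : sparseSupport (p - q) ⊆ V :=
      subset_trans (supp_sub_subset p q) (Finset.union_subset hp hq)
    have h1 := Hup (p + q) hpq
    have h2 := Hlow (p - q) hmq
    have e1 : ∑ i, (B.mulVec (p + q)) i ^ 2
        = ∑ i, (B.mulVec p) i ^ 2 + 2 * ∑ i, (B.mulVec p) i * (B.mulVec q) i
          + ∑ i, (B.mulVec q) i ^ 2 := by
      rw [Matrix.mulVec_add, sum_sq_add]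
    have e2 : ∑ i, (B.mulVec (p - q)) i ^ 2
        = ∑ i, (B.mulVec p) i ^ 2 - 2 * ∑ i, (B.mulVec p) i * (B.mulVec q) i
          + ∑ i, (B.mulVec q) i ^ 2 := by
      rw [Matrix.mulVec_sub, sum_sq_sub]
    have e3 := sum_sq_add p q
    have e4 := sum_sq_sub p q
    rw [e1, e3] at h1
    rw [e2, e4] at h2
    linarith
  have step1' : ∀ p q : Fin n → ℝ, sparseSupport p ⊆ V → sparseSupport q ⊆ V →
      |∑ i, (B.mulVec p) i * (B.mulVec q) i - ∑ j, p j * q j|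
        ≤ δ * (∑ j, p j ^ 2 + ∑ j, q j ^ 2) / 2 := by
    intro p q hp hq
    rw [abs_le]
    constructor
    · have hq' : sparseSupport (-q) ⊆ V := by
        intro i hi
        apply hq
        rw [mem_sparseSupport] at hi ⊢
        simpa using hi
      have h := step1 p (-q) hp hq'
      have eB : B.mulVec (-q) = -(B.mulVec q) := by rw [Matrix.mulVec_neg]
      rw [eB] at h
      have e1 : ∑ i, (B.mulVec p) i * (-(B.mulVec q)) i = -∑ i, (B.mulVec p) i * (B.mulVec q) i := by
        rw [← Finset.sum_neg_distrib]; apply Finset.sum_congr rfl; intros; simp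
      have e2 : ∑ j, p j * (-q) j = -∑ j, p j * q j := by
        rw [← Finset.sum_neg_distrib]; apply Finset.sum_congr rfl; intros; simp
      have e3 : ∑ j, (-q) j ^ 2 = ∑ j, q j ^ 2 := by
        apply Finset.sum_congr rfl; intros; simp
      rw [e1, e2, e3] at h
      linarith
    · exact step1 p q hp hq
  -- Step 2 : scaling
  set P := ∑ j, z j ^ 2 with hP
  set Q2 := ∑ j, w j ^ 2 with hQ2
  have hP0 : 0 ≤ P := Finset.sum_nonneg fun _ _ => sq_nonneg _
  have hQ20 : 0 ≤ Q2 := Finset.sum_nonneg fun _ _ => sq_nonneg _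
  by_cases hPz : P = 0
  · have hz0 : z = 0 := eq_zero_of_sum_sq_eq_zero hPz
    subst hz0
    have : B.mulVec 0 = 0 := by simp
    rw [this]
    simp only [Pi.zero_apply, zero_mul, Finset.sum_const_zero, sub_zero, abs_zero]
    exact mul_nonneg (mul_nonneg hδ0 (Real.sqrt_nonneg _)) (Real.sqrt_nonneg _)
  by_cases hQz : Q2 = 0
  · have hw0 : w = 0 := eq_zero_of_sum_sq_eq_zero hQz
    subst hw0
    have : B.mulVec 0 = 0 := by simp
    rw [this]
    simp only [Pi.zero_apply, mul_zero, Finset.sum_const_zero, sub_zero, abs_zero]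
    exact mul_nonneg (mul_nonneg hδ0 (Real.sqrt_nonneg _)) (Real.sqrt_nonneg _)
  have hsa : 0 < Real.sqrt P := Real.sqrt_pos.2 (lt_of_le_of_ne hP0 (Ne.symm hPz))
  have hsb : 0 < Real.sqrt Q2 := Real.sqrt_pos.2 (lt_of_le_of_ne hQ20 (Ne.symm hQz))
  set sa := Real.sqrt P
  set sb := Real.sqrt Q2
  have hsa2 : sa ^ 2 = P := Real.sq_sqrt hP0
  have hsb2 : sb ^ 2 = Q2 := Real.sq_sqrt hQ20
  have hzs : sparseSupport (sb • z) ⊆ V := subset_trans (supp_smul_subset sb z) hz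
  have hws : sparseSupport (sa • w) ⊆ V := subset_trans (supp_smul_subset sa w) hw
  have h := step1' (sb • z) (sa • w) hzs hws
  have eB1 : B.mulVec (sb • z) = sb • B.mulVec z := Matrix.mulVec_smul B sb z
  have eB2 : B.mulVec (sa • w) = sa • B.mulVec w := Matrix.mulVec_smul B sa w
  rw [eB1, eB2] at h
  have e1 : ∑ i, (sb • B.mulVec z) i * (sa • B.mulVec w) i
      = sa * sb * ∑ i, (B.mulVec z) i * (B.mulVec w) i := by
    rw [Finset.mul_sum]; apply Finset.sum_congr rfl; intros
    simp only [Pi.smul_apply, smul_eq_mul]; ring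
  have e2 : ∑ j, (sb • z) j * (sa • w) j = sa * sb * ∑ j, z j * w j := by
    rw [Finset.mul_sum]; apply Finset.sum_congr rfl; intros
    simp only [Pi.smul_apply, smul_eq_mul]; ring
  have e3 : ∑ j, (sb • z) j ^ 2 = sb ^ 2 * P := by
    rw [hP, Finset.mul_sum]; apply Finset.sum_congr rfl; intros
    simp only [Pi.smul_apply, smul_eq_mul]; ring
  have e4 : ∑ j, (sa • w) j ^ 2 = sa ^ 2 * Q2 := by
    rw [hQ2, Finset.mul_sum]; apply Finset.sum_congr rfl; intros
    simp only [Pi.smul_apply, smul_eq_mul]; ring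
  rw [e1, e2, e3, e4, hsa2, hsb2, ← mul_sub, abs_mul,
    abs_of_nonneg (le_of_lt (mul_pos hsa hsb))] at h
  have hfin : sa * sb * |∑ i, (B.mulVec z) i * (B.mulVec w) i - ∑ j, z j * w j|
      ≤ sa * sb * (δ * sa * sb) := by
    calc sa * sb * |∑ i, (B.mulVec z) i * (B.mulVec w) i - ∑ j, z j * w j|
        ≤ δ * (Q2 * P + P * Q2) / 2 := h
      _ = sa * sb * (δ * sa * sb) := by rw [← hsa2, ← hsb2]; ring
  have := le_of_mul_le_mul_left hfin (mul_pos hsa hsb)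
  linarith

lemma projPerp_mulVec_idem {m n : ℕ} (A : Matrix (Fin m) (Fin n) ℝ) (S : Finset (Fin n))
    (hdet : IsUnit ((colSub A S)ᵀ * colSub A S).det) (u : Fin m → ℝ) :
    (projPerp A S).mulVec ((projPerp A S).mulVec u) = (projPerp A S).mulVec u := by
  rw [Matrix.mulVec_mulVec, projPerp_idem A S hdet]

end OMPAux

set_option maxHeartbeats 2000000 in
/-- Theorem 1: under `δ_{K+1} < 1/√(K+1)` and
`min_{i∈Ω}|x_i| > 2ε/(1−√(K+1)δ)`, OMP with stopping rule `‖r^k‖₂ ≤ ε`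
performs exactly `|Ω|` iterations and exactly recovers `Ω = supp(x)`. -/
theorem omp_support_recovery_noisy {m n K : ℕ} (hK : 1 ≤ K)
    (A : Matrix (Fin m) (Fin n) ℝ) (x : Fin n → ℝ) (v : Fin m → ℝ) (ε δ : ℝ)
    (hδ0 : 0 ≤ δ) (hδlt1 : δ < 1)
    (hδ : δ < 1 / Real.sqrt ((K : ℝ) + 1))
    (hRIP : RIP A (K + 1) δ)
    (hx : (sparseSupport x).card ≤ K)
    (hne : (sparseSupport x).Nonempty)
    (hv : l2norm v ≤ ε)
    (hmin : ∀ i ∈ sparseSupport x,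
      2 * ε / (1 - Real.sqrt ((K : ℝ) + 1) * δ) < |x i|)
    (y : Fin m → ℝ) (hy : y = A.mulVec x + v)
    (s : ℕ → Fin n) (S : ℕ → Finset (Fin n)) (r : ℕ → Fin m → ℝ)
    (hS0 : S 0 = ∅)
    (hSk : ∀ k, S (k + 1) = S k ∪ {s (k + 1)})
    (hr : ∀ k, r k = (projPerp A (S k)).mulVec y)
    (hsel : ∀ k, ∀ i : Fin n,
      |(Aᵀ.mulVec (r k)) i| ≤ |(Aᵀ.mulVec (r k)) (s (k + 1))|) :
    (∀ k < (sparseSupport x).card, ε < l2norm (r k)) ∧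
    S (sparseSupport x).card = sparseSupport x ∧
    l2norm (r (sparseSupport x).card) ≤ ε := by
  classical
  have hε0 : 0 ≤ ε := le_trans (Real.sqrt_nonneg _) hv
  have hsK1 : 1 ≤ Real.sqrt ((K : ℝ) + 1) := by
    rw [Real.one_le_sqrt]
    have : (0:ℝ) ≤ (K:ℝ) := Nat.cast_nonneg K
    linarith
  have hK1pos : (0:ℝ) < Real.sqrt ((K : ℝ) + 1) := lt_of_lt_of_le one_pos hsK1
  have hc1 : 0 < 1 - Real.sqrt ((K : ℝ) + 1) * δ := by
    have h := (lt_div_iff₀ hK1pos).1 hδ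
    nlinarith
  have hMc1 : (1 - Real.sqrt ((K : ℝ) + 1) * δ) * (2 * ε / (1 - Real.sqrt ((K : ℝ) + 1) * δ)) = 2 * ε := by
    field_simp
  have hM0 : 0 ≤ 2 * ε / (1 - Real.sqrt ((K : ℝ) + 1) * δ) :=
    div_nonneg (by linarith) (le_of_lt hc1)
  set M := 2 * ε / (1 - Real.sqrt ((K : ℝ) + 1) * δ) with hMdef
  -- ===================== the main step lemma =====================
  have step : ∀ k, S k ⊆ sparseSupport x → (S k).card = k → k < (sparseSupport x).card →
      s (k + 1) ∈ sparseSupport x \ S k ∧ ε < l2norm (r k) := by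
    intro k hsub hcard hkL
    have hSkcard : (S k).card ≤ K + 1 := by
      rw [hcard]
      have := le_trans (le_of_lt hkL) hx
      omega
    have hdet : IsUnit ((colSub A (S k))ᵀ * colSub A (S k)).det :=
      OMPAux.gram_det A (S k) hRIP hδlt1 hSkcard
    set T := sparseSupport x \ S k with hTdef
    have hTsub : T ⊆ sparseSupport x := Finset.sdiff_subset
    have hTdisj : Disjoint T (S k) := Finset.sdiff_disjoint
    have hTne : T.Nonempty := by
      rw [← Finset.card_pos, Finset.card_sdiff_of_subset hsub, hcard]
      omega
    have hUnion : S k ∪ T = sparseSupport x := Finset.union_sdiff_of_subset hsub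
    set x1 := restrictVec x (S k) with hx1def
    set x2 := restrictVec x T with hx2def
    have hx1supp : sparseSupport x1 ⊆ S k := OMPAux.supp_restrict x (S k)
    have hx2supp : sparseSupport x2 ⊆ T := OMPAux.supp_restrict x T
    have hxsplit : x = x1 + x2 := by
      funext j
      rw [hx1def, hx2def]
      show x j = restrictVec x (S k) j + restrictVec x T j
      by_cases h1 : j ∈ S k
      · have h2 : j ∉ T := fun ht => (Finset.mem_sdiff.1 ht).2 h1
        simp [restrictVec, h1, h2]
      · by_cases h2 : j ∈ T
        · simp [restrictVec, h1, h2]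
        · have h3 : j ∉ sparseSupport x := by
            intro hj
            exact h2 (Finset.mem_sdiff.2 ⟨hj, h1⟩)
          have hx0 : x j = 0 := OMPAux.not_mem_sparseSupport h3
          simp [restrictVec, h1, h2, hx0]
    set a := ∑ l ∈ T, x l ^ 2 with hadef
    have hax2 : ∑ j, x2 j ^ 2 = a := by
      rw [OMPAux.sum_sq_eq_sum_supp x2 T hx2supp, hadef]
      apply Finset.sum_congr rfl
      intro l hl
      rw [hx2def]
      simp [restrictVec, hl]
    have hminT : ∀ jj ∈ T, M < |x jj| := fun jj hj => hmin jj (hTsub hj)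
    have haM : (T.card : ℝ) * M ^ 2 < a := by
      have hterm : ∀ jj ∈ T, M ^ 2 < x jj ^ 2 := by
        intro jj hj
        have h1 := hminT jj hj
        nlinarith [hM0, abs_nonneg (x jj), sq_abs (x jj)]
      calc (T.card : ℝ) * M ^ 2 = ∑ _l ∈ T, M ^ 2 := by
            rw [Finset.sum_const, nsmul_eq_mul]
        _ < a := Finset.sum_lt_sum_of_nonempty hTne hterm
    have ha0 : 0 < a := lt_of_le_of_lt (mul_nonneg (Nat.cast_nonneg _) (sq_nonneg M)) haM
    set sa := Real.sqrt a with hsadef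
    have hsa0 : 0 < sa := Real.sqrt_pos.2 ha0
    have hsa2 : sa ^ 2 = a := Real.sq_sqrt (le_of_lt ha0)
    have hsaM : Real.sqrt (T.card : ℝ) * M < sa := by
      have h := Real.sqrt_lt_sqrt (mul_nonneg (Nat.cast_nonneg _) (sq_nonneg M)) haM
      rwa [Real.sqrt_mul (Nat.cast_nonneg _) (M ^ 2), Real.sqrt_sq hM0] at h
    have hL'1 : (1 : ℝ) ≤ (T.card : ℝ) := by
      have := Finset.card_pos.2 hTne
      exact_mod_cast this
    have hL'K : (T.card : ℝ) ≤ (K : ℝ) := by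
      have := le_trans (Finset.card_le_card hTsub) hx
      exact_mod_cast this
    have hsT1 : (1:ℝ) ≤ Real.sqrt (T.card : ℝ) := by
      rw [Real.one_le_sqrt]
      exact hL'1
    set D := δ * sa + Real.sqrt (1 + δ) * ε with hDdef
    have hD0 : 0 ≤ D := add_nonneg (mul_nonneg hδ0 (le_of_lt hsa0))
      (mul_nonneg (Real.sqrt_nonneg _) hε0)
    have hsL1K : Real.sqrt ((T.card : ℝ) + 1) ≤ Real.sqrt ((K : ℝ) + 1) :=
      Real.sqrt_le_sqrt (by linarith)
    have h2L : Real.sqrt ((T.card : ℝ) + 1) * Real.sqrt (1 + δ) ≤ 2 * Real.sqrt (T.card : ℝ) := by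
      rw [← Real.sqrt_mul (by linarith) (1 + δ)]
      have h4 : (2 : ℝ) * Real.sqrt (T.card : ℝ) = Real.sqrt (4 * (T.card : ℝ)) := by
        rw [show (4 : ℝ) * (T.card : ℝ) = 2 ^ 2 * (T.card : ℝ) by norm_num,
          Real.sqrt_mul (by positivity), Real.sqrt_sq (by norm_num)]
      rw [h4]
      apply Real.sqrt_le_sqrt
      nlinarith
    have hstrict : Real.sqrt ((T.card : ℝ) + 1) * D < sa := by
      have t1 : Real.sqrt ((T.card : ℝ) + 1) * (δ * sa) ≤ Real.sqrt ((K : ℝ) + 1) * δ * sa := by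
        have h := mul_le_mul_of_nonneg_right (mul_le_mul_of_nonneg_right hsL1K hδ0) hsa0.le
        linarith
      have t2 : Real.sqrt ((T.card : ℝ) + 1) * (Real.sqrt (1 + δ) * ε)
          ≤ 2 * Real.sqrt (T.card : ℝ) * ε := by
        have h := mul_le_mul_of_nonneg_right h2L hε0
        linarith
      have t3 : 2 * Real.sqrt (T.card : ℝ) * ε
          = Real.sqrt (T.card : ℝ) * ((1 - Real.sqrt ((K : ℝ) + 1) * δ) * M) := by
        rw [hMc1]
        ring
      have t4 : Real.sqrt (T.card : ℝ) * M * (1 - Real.sqrt ((K : ℝ) + 1) * δ)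
          < sa * (1 - Real.sqrt ((K : ℝ) + 1) * δ) :=
        mul_lt_mul_of_pos_right hsaM hc1
      have expand : Real.sqrt ((T.card : ℝ) + 1) * D
          = Real.sqrt ((T.card : ℝ) + 1) * (δ * sa)
            + Real.sqrt ((T.card : ℝ) + 1) * (Real.sqrt (1 + δ) * ε) := by
        rw [hDdef]
        ring
      rw [expand]
      linarith
    -- ============ two-sided bounds for the projected matrix ============
    have HBgen : ∀ V : Finset (Fin n), Disjoint V (S k) → (V ∪ S k).card ≤ K + 1 →
        (∀ z : Fin n → ℝ, sparseSupport z ⊆ V →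
          (1 - δ) * ∑ j, z j ^ 2 ≤ ∑ i, ((projPerp A (S k) * A).mulVec z) i ^ 2) ∧
        (∀ z : Fin n → ℝ, sparseSupport z ⊆ V →
          ∑ i, ((projPerp A (S k) * A).mulVec z) i ^ 2 ≤ (1 + δ) * ∑ j, z j ^ 2) := by
      intro V hVdisj hVcard
      constructor
      · intro z hzV
        obtain ⟨g, hgsupp, hg⟩ := OMPAux.projPerp_repr A (S k) z
        have hrw : (projPerp A (S k) * A).mulVec z = A.mulVec (z - g) := by
          rw [← Matrix.mulVec_mulVec, hg, ← Matrix.mulVec_sub]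
        rw [hrw]
        have hsupp : (sparseSupport (z - g)).card ≤ K + 1 := by
          apply le_trans (Finset.card_le_card (subset_trans (OMPAux.supp_sub_subset z g)
            (Finset.union_subset_union hzV hgsupp))) hVcard
        have hrip := (hRIP (z - g) hsupp).1
        have hzero : ∑ j, z j * g j = 0 := by
          apply Finset.sum_eq_zero
          intro j _
          by_cases hj : z j = 0
          · rw [hj]; ring
          · have hjV : j ∈ V := hzV (OMPAux.mem_sparseSupport.2 hj)
            have hjS : j ∉ S k := fun hjs => (Finset.disjoint_left.1 hVdisj hjV) hjs
            have hgj : g j = 0 := by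
              by_contra hg0
              exact hjS (hgsupp (OMPAux.mem_sparseSupport.2 hg0))
            rw [hgj]
            ring
        have hzg : ∑ j, z j ^ 2 ≤ ∑ j, (z - g) j ^ 2 := by
          rw [OMPAux.sum_sq_sub, hzero]
          have := OMPAux.sum_sq_nonneg g
          linarith
        calc (1 - δ) * ∑ j, z j ^ 2 ≤ (1 - δ) * ∑ j, (z - g) j ^ 2 := by nlinarith
          _ ≤ _ := hrip
      · intro z hzV
        have hcard' : (sparseSupport z).card ≤ K + 1 :=
          le_trans (Finset.card_le_card (subset_trans hzV Finset.subset_union_left)) hVcard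
        have hrip := (hRIP z hcard').2
        have hcontr : ∑ i, ((projPerp A (S k) * A).mulVec z) i ^ 2
            ≤ ∑ i, (A.mulVec z) i ^ 2 := by
          rw [← Matrix.mulVec_mulVec]
          exact OMPAux.projPerp_contract A (S k) hdet (A.mulVec z)
        exact le_trans hcontr hrip
    have hTcardK : (T ∪ S k).card ≤ K + 1 := by
      rw [Finset.union_comm, hUnion]
      omega
    have HT := HBgen T hTdisj hTcardK
    -- ================= residual norm lower bound =================
    have hrk : r k = (projPerp A (S k) * A).mulVec x2 + (projPerp A (S k)).mulVec v := by
      rw [hr k, hy, Matrix.mulVec_add]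
      congr 1
      conv_lhs => rw [hxsplit]
      rw [Matrix.mulVec_add, Matrix.mulVec_add,
        OMPAux.projPerp_mulVec_A_eq_zero A (S k) hdet x1 hx1supp, zero_add,
        Matrix.mulVec_mulVec]
    have hQv : l2norm ((projPerp A (S k)).mulVec v) ≤ ε := by
      apply le_trans ?_ hv
      exact Real.sqrt_le_sqrt (OMPAux.projPerp_contract A (S k) hdet v)
    have hQAx2 : 2 * ε < l2norm ((projPerp A (S k) * A).mulVec x2) := by
      have hlow := HT.1 x2 hx2supp
      rw [hax2] at hlow
      have h1 : Real.sqrt ((1 - δ) * a) ≤ l2norm ((projPerp A (S k) * A).mulVec x2) :=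
        Real.sqrt_le_sqrt hlow
      rw [Real.sqrt_mul (by linarith : (0:ℝ) ≤ 1 - δ) a] at h1
      have hs1 : 1 - δ ≤ Real.sqrt (1 - δ) := by
        nlinarith [Real.sq_sqrt (show (0:ℝ) ≤ 1 - δ by linarith), Real.sqrt_nonneg (1 - δ)]
      have hsqpos : 0 < Real.sqrt (1 - δ) := Real.sqrt_pos.2 (by linarith)
      have hchain : 2 * ε < Real.sqrt (1 - δ) * sa := by
        have c1 : 2 * ε = (1 - Real.sqrt ((K : ℝ) + 1) * δ) * M := hMc1.symm
        have c2 : (1 - Real.sqrt ((K : ℝ) + 1) * δ) * M ≤ (1 - δ) * M := by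
          nlinarith [mul_nonneg (mul_nonneg (sub_nonneg.2 hsK1) hδ0) hM0]
        have c3 : (1 - δ) * M ≤ Real.sqrt (1 - δ) * M := by nlinarith [hM0]
        have c4 : Real.sqrt (1 - δ) * M ≤ Real.sqrt (1 - δ) * (Real.sqrt (T.card : ℝ) * M) := by
          nlinarith [hM0, hsT1, Real.sqrt_nonneg (1 - δ)]
        have c5 : Real.sqrt (1 - δ) * (Real.sqrt (T.card : ℝ) * M) < Real.sqrt (1 - δ) * sa :=
          mul_lt_mul_of_pos_left hsaM hsqpos
        linarith
      linarith
    have hres : ε < l2norm (r k) := by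
      have heq : (projPerp A (S k) * A).mulVec x2
          = r k + (-(projPerp A (S k)).mulVec v) := by
        rw [hrk]
        funext i
        simp
      have htri : l2norm ((projPerp A (S k) * A).mulVec x2)
          ≤ l2norm (r k) + l2norm ((projPerp A (S k)).mulVec v) := by
        rw [heq]
        apply le_trans (OMPAux.l2norm_add_le _ _)
        have hneg : l2norm (-(projPerp A (S k)).mulVec v)
            = l2norm ((projPerp A (S k)).mulVec v) := by
          unfold l2norm
          congr 1
          apply Finset.sum_congr rfl
          intros
          simp
        rw [hneg]
      linarith
    -- ================= the Δ bound =================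
    have hDelta : ∀ U : Finset (Fin n), T ⊆ U → Disjoint U (S k) → (U ∪ S k).card ≤ K + 1 →
        ∑ l ∈ U, ((Aᵀ.mulVec (r k)) l - x2 l) ^ 2 ≤ D ^ 2 := by
      intro U hTU hUdisj hUcard
      have HU := HBgen U hUdisj hUcard
      set Δ := restrictVec (fun l => (Aᵀ.mulVec (r k)) l - x2 l) U with hΔdef
      have hΔsupp : sparseSupport Δ ⊆ U := OMPAux.supp_restrict _ U
      set c := ∑ j, Δ j ^ 2 with hcdef
      have hc0 : 0 ≤ c := OMPAux.sum_sq_nonneg Δ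
      have hUeq : ∑ l ∈ U, ((Aᵀ.mulVec (r k)) l - x2 l) ^ 2 = c := by
        rw [hcdef, OMPAux.sum_sq_eq_sum_supp Δ U hΔsupp]
        apply Finset.sum_congr rfl
        intro l hl
        rw [hΔdef]
        simp [restrictVec, hl]
      rw [hUeq]
      have key1 : c = (∑ j, Δ j * (Aᵀ.mulVec (r k)) j) - ∑ j, Δ j * x2 j := by
        rw [hcdef, ← Finset.sum_sub_distrib]
        apply Finset.sum_congr rfl
        intro j _
        by_cases hj : j ∈ U
        · rw [hΔdef]
          simp only [restrictVec, if_pos hj]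
          ring
        · rw [hΔdef]
          simp only [restrictVec, if_neg hj]
          ring
      have key2 : ∑ j, Δ j * (Aᵀ.mulVec (r k)) j = ∑ i, (A.mulVec Δ) i * (r k) i := by
        have h := Matrix.dotProduct_mulVec Δ Aᵀ (r k)
        rw [Matrix.vecMul_transpose] at h
        exact h
      have hAx : A.mulVec x = A.mulVec x1 + A.mulVec x2 := by
        conv_lhs => rw [hxsplit]
        rw [Matrix.mulVec_add]
      have key3 : ∑ i, (A.mulVec Δ) i * (r k) i
          = (∑ i, ((projPerp A (S k) * A).mulVec Δ) i * ((projPerp A (S k) * A).mulVec x2) i)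
            + ∑ i, v i * ((projPerp A (S k) * A).mulVec Δ) i := by
        have e0 : (A.mulVec Δ) ⬝ᵥ (r k) = ((projPerp A (S k)).mulVec (A.mulVec Δ)) ⬝ᵥ y := by
          rw [hr k, ← OMPAux.dot_projPerp_comm A (S k) (A.mulVec Δ) y]
        have e1 : ((projPerp A (S k)).mulVec (A.mulVec Δ)) ⬝ᵥ y
            = ((projPerp A (S k)).mulVec (A.mulVec Δ)) ⬝ᵥ (A.mulVec x1)
              + ((projPerp A (S k)).mulVec (A.mulVec Δ)) ⬝ᵥ (A.mulVec x2)
              + ((projPerp A (S k)).mulVec (A.mulVec Δ)) ⬝ᵥ v := by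
          rw [hy, hAx, dotProduct_add, dotProduct_add]
        have e2 : ((projPerp A (S k)).mulVec (A.mulVec Δ)) ⬝ᵥ (A.mulVec x1) = 0 := by
          rw [OMPAux.dot_projPerp_comm A (S k) (A.mulVec Δ) (A.mulVec x1),
            OMPAux.projPerp_mulVec_A_eq_zero A (S k) hdet x1 hx1supp]
          simp
        have e3 : ((projPerp A (S k)).mulVec (A.mulVec Δ)) ⬝ᵥ (A.mulVec x2)
            = ((projPerp A (S k)).mulVec (A.mulVec Δ)) ⬝ᵥ ((projPerp A (S k)).mulVec (A.mulVec x2)) := by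
          conv_lhs => rw [← OMPAux.projPerp_mulVec_idem A (S k) hdet (A.mulVec Δ)]
          rw [OMPAux.dot_projPerp_comm A (S k) ((projPerp A (S k)).mulVec (A.mulVec Δ)) (A.mulVec x2)]
        have e4 : ((projPerp A (S k)).mulVec (A.mulVec Δ)) ⬝ᵥ v
            = v ⬝ᵥ ((projPerp A (S k)).mulVec (A.mulVec Δ)) := dotProduct_comm _ _
        have efin : (A.mulVec Δ) ⬝ᵥ (r k)
            = ((projPerp A (S k)).mulVec (A.mulVec Δ)) ⬝ᵥ ((projPerp A (S k)).mulVec (A.mulVec x2))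
              + v ⬝ᵥ ((projPerp A (S k)).mulVec (A.mulVec Δ)) := by
          rw [e0, e1, e2, e3, e4]
          ring
        rw [Matrix.mulVec_mulVec, Matrix.mulVec_mulVec] at efin
        exact efin
      have hx2U : sparseSupport x2 ⊆ U := subset_trans hx2supp hTU
      have habs1 : |(∑ i, ((projPerp A (S k) * A).mulVec Δ) i * ((projPerp A (S k) * A).mulVec x2) i)
          - ∑ j, Δ j * x2 j| ≤ δ * Real.sqrt c * sa := by
        have hp := OMPAux.polar (projPerp A (S k) * A) U δ hδ0 HU.1 HU.2 Δ x2 hΔsupp hx2U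
        rw [hax2] at hp
        rw [hcdef, hsadef]
        exact hp
      have habs2 : |∑ i, v i * ((projPerp A (S k) * A).mulVec Δ) i|
          ≤ ε * (Real.sqrt (1 + δ) * Real.sqrt c) := by
        have hcs := OMPAux.abs_dot_le_l2 v ((projPerp A (S k) * A).mulVec Δ)
        have h2 : l2norm ((projPerp A (S k) * A).mulVec Δ) ≤ Real.sqrt (1 + δ) * Real.sqrt c := by
          unfold l2norm
          have := Real.sqrt_le_sqrt (HU.2 Δ hΔsupp)
          rwa [Real.sqrt_mul (by linarith : (0:ℝ) ≤ 1 + δ) _] at this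
        calc |∑ i, v i * ((projPerp A (S k) * A).mulVec Δ) i|
            ≤ l2norm v * l2norm ((projPerp A (S k) * A).mulVec Δ) := hcs
          _ ≤ ε * (Real.sqrt (1 + δ) * Real.sqrt c) :=
              mul_le_mul hv h2 (OMPAux.l2norm_nonneg _) hε0
      have hkey : c ≤ Real.sqrt c * D := by
        have e : c = ((∑ i, ((projPerp A (S k) * A).mulVec Δ) i * ((projPerp A (S k) * A).mulVec x2) i)
            - ∑ j, Δ j * x2 j) + ∑ i, v i * ((projPerp A (S k) * A).mulVec Δ) i := by
          rw [key1, key2, key3]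
          ring
        have b1 := abs_le.1 habs1
        have b2 := abs_le.1 habs2
        rw [hDdef]
        nlinarith [b1.2, b2.2]
      nlinarith [Real.sq_sqrt hc0, Real.sqrt_nonneg c, hD0, hkey, sq_nonneg (Real.sqrt c - D)]
    -- ================= w vanishes on S k =================
    have hw0 : ∀ l ∈ S k, (Aᵀ.mulVec (r k)) l = 0 := by
      intro l hl
      have hsingle : sparseSupport (Pi.single l (1:ℝ)) ⊆ S k := by
        intro j hj
        have hne0 := OMPAux.mem_sparseSupport.1 hj
        rcases eq_or_ne j l with rfl | hne
        · exact hl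
        · exact absurd (Pi.single_eq_of_ne hne 1) hne0
      have e0 : (projPerp A (S k)).mulVec (A.mulVec (Pi.single l (1:ℝ))) = 0 :=
        OMPAux.projPerp_mulVec_A_eq_zero A (S k) hdet _ hsingle
      have e1 : (Aᵀ.mulVec (r k)) l = ∑ i, (A.mulVec (Pi.single l (1:ℝ))) i * (r k) i := by
        simp only [Matrix.mulVec_single, MulOpposite.op_one, one_smul]
        show ∑ i, Aᵀ l i * (r k) i = ∑ i, A i l * (r k) i
        apply Finset.sum_congr rfl
        intros
        rw [Matrix.transpose_apply]
      have e2 : (A.mulVec (Pi.single l (1:ℝ))) ⬝ᵥ ((projPerp A (S k)).mulVec y)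
          = ((projPerp A (S k)).mulVec (A.mulVec (Pi.single l (1:ℝ)))) ⬝ᵥ y :=
        (OMPAux.dot_projPerp_comm A (S k) (A.mulVec (Pi.single l (1:ℝ))) y).symm
      rw [e1, hr k]
      show (A.mulVec (Pi.single l (1:ℝ))) ⬝ᵥ ((projPerp A (S k)).mulVec y) = 0
      rw [e2, e0]
      simp
    -- ================= correct selection =================
    have hstrict2 : Real.sqrt ((T.card : ℝ) + 1) * D < Real.sqrt (∑ l ∈ T, x2 l ^ 2) := by
      have hsum2 : ∑ l ∈ T, x2 l ^ 2 = a := by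
        rw [hadef]
        apply Finset.sum_congr rfl
        intro l hl
        rw [hx2def]
        simp [restrictVec, hl]
      rw [hsum2]
      exact hstrict
    have hselstep : s (k + 1) ∈ T := by
      by_contra hsT
      by_cases hsS : s (k + 1) ∈ S k
      · have hUT := hDelta T (subset_refl T) hTdisj hTcardK
        have hcore := OMPAux.core T hTne x2 (Aᵀ.mulVec (r k)) 0 D le_rfl hD0
          (by simpa using hUT) hstrict2
        obtain ⟨j, hjT, hj⟩ := hcore
        have hle := hsel k j
        rw [hw0 (s (k + 1)) hsS] at hle
        simp only [abs_zero] at hle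
        linarith
      · have hUdisj : Disjoint (insert (s (k + 1)) T) (S k) := by
          rw [Finset.disjoint_left]
          intro jj hjj hjjS
          rcases Finset.mem_insert.1 hjj with rfl | hjT'
          · exact hsS hjjS
          · exact (Finset.mem_sdiff.1 hjT').2 hjjS
        have hUcard : (insert (s (k + 1)) T ∪ S k).card ≤ K + 1 := by
          have hsΩ : s (k + 1) ∉ sparseSupport x := by
            intro hmem
            exact hsT (Finset.mem_sdiff.2 ⟨hmem, hsS⟩)
          have heqU : insert (s (k + 1)) T ∪ S k = insert (s (k + 1)) (sparseSupport x) := by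
            rw [Finset.insert_union, Finset.union_comm, hUnion]
          rw [heqU]
          have := Finset.card_insert_le (s (k + 1)) (sparseSupport x)
          omega
        have hUT := hDelta (insert (s (k + 1)) T) (Finset.subset_insert _ T) hUdisj hUcard
        rw [Finset.sum_insert hsT] at hUT
        have hx2s : x2 (s (k + 1)) = 0 := by
          rw [hx2def]
          simp [restrictVec, hsT]
        rw [hx2s, sub_zero, ← sq_abs] at hUT
        have hcore := OMPAux.core T hTne x2 (Aᵀ.mulVec (r k))
          |(Aᵀ.mulVec (r k)) (s (k + 1))| D (abs_nonneg _) hD0 hUT hstrict2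
        obtain ⟨j, hjT, hj⟩ := hcore
        exact absurd (hsel k j) (not_le.2 hj)
    exact ⟨hselstep, hres⟩
  -- ===================== induction =====================
  have inv : ∀ k, k ≤ (sparseSupport x).card → S k ⊆ sparseSupport x ∧ (S k).card = k := by
    intro k
    induction k with
    | zero =>
      intro _
      rw [hS0]
      exact ⟨Finset.empty_subset _, Finset.card_empty⟩
    | succ k ih =>
      intro hk1
      have hk : k < (sparseSupport x).card := by omega
      obtain ⟨h1, h2⟩ := ih (le_of_lt hk)
      obtain ⟨hsmem, _⟩ := step k h1 h2 hk
      have hsΩ : s (k + 1) ∈ sparseSupport x := (Finset.mem_sdiff.1 hsmem).1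
      have hsS : s (k + 1) ∉ S k := (Finset.mem_sdiff.1 hsmem).2
      have hins : S k ∪ {s (k + 1)} = insert (s (k + 1)) (S k) := by
        rw [Finset.insert_eq, Finset.union_comm]
      rw [hSk k, hins]
      constructor
      · exact Finset.insert_subset hsΩ h1
      · rw [Finset.card_insert_of_notMem hsS, h2]
  refine ⟨?_, ?_, ?_⟩
  · intro k hk
    obtain ⟨h1, h2⟩ := inv k (le_of_lt hk)
    exact (step k h1 h2 hk).2
  · obtain ⟨h1, h2⟩ := inv (sparseSupport x).card le_rfl
    exact Finset.eq_of_subset_of_card_le h1 (le_of_eq h2.symm)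
  · have hSL : S (sparseSupport x).card = sparseSupport x := by
      obtain ⟨h1, h2⟩ := inv (sparseSupport x).card le_rfl
      exact Finset.eq_of_subset_of_card_le h1 (le_of_eq h2.symm)
    have hdet : IsUnit ((colSub A (sparseSupport x))ᵀ * colSub A (sparseSupport x)).det :=
      OMPAux.gram_det A (sparseSupport x) hRIP hδlt1 (by omega)
    have hrL : r (sparseSupport x).card = (projPerp A (sparseSupport x)).mulVec v := by
      rw [hr, hSL, hy, Matrix.mulVec_add,
        OMPAux.projPerp_mulVec_A_eq_zero A (sparseSupport x) hdet x (subset_refl _), zero_add]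
    rw [hrL]
    apply le_trans ?_ hv
    exact Real.sqrt_le_sqrt (OMPAux.projPerp_contract A (sparseSupport x) hdet v)
end

section
/- Let y = Ax, where A ∈ ℝ^{m×n} and x ∈ ℝⁿ is K-sparse with nonempty support Ω = supp(x). Suppose δ ∈ [0,1) satisfies the RIP of order K+1 for A with δ < 1/√(K+1). Consider any sequence produced by the OMP algorithm: S₀ = ∅, r⁰ = y, and for k ≥ 1, s^k is any index maximizing |⟨r^{k−1}, A_i⟩| over 1 ≤ i ≤ n, S_k = S_{k−1} ∪ {s^k}, and r^k = P_{S_k}^⊥ y. Then S_{|Ω|} = Ω, r^{|Ω|} = 0, and the least-squares estimate x̂ supported on S_{|Ω|} defined by x̂_{S_{|Ω|}} = argmin_z ‖y − A_{S_{|Ω|}} z‖₂ (zero outside S_{|Ω|}) equals x; i.e., OMP exactly recovers the K-sparse signal x in at most K iterations. -/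
open Matrix Finset

lemma mem_sparseSupport {n : ℕ} {x : Fin n → ℝ} {i : Fin n} :
    i ∈ sparseSupport x ↔ x i ≠ 0 := by simp [sparseSupport]

lemma dot_mulVec_eq {m n : ℕ} (A : Matrix (Fin m) (Fin n) ℝ) (v : Fin n → ℝ) (w : Fin m → ℝ) :
    ∑ j, v j * (Aᵀ.mulVec w) j = ∑ i, (A.mulVec v) i * w i := by
  simp only [Matrix.mulVec, dotProduct, Matrix.transpose_apply, Finset.mul_sum,
    Finset.sum_mul]
  rw [Finset.sum_comm]
  apply Finset.sum_congr rfl; intro i _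
  apply Finset.sum_congr rfl; intro j _
  ring

lemma expand_sq {ι : Type*} [Fintype ι] (s : Finset ι) (f h : ι → ℝ) (β : ℝ) :
    ∑ i ∈ s, (f i + β * h i)^2 =
      ∑ i ∈ s, f i^2 + 2*β*(∑ i ∈ s, f i * h i) + β^2 * ∑ i ∈ s, h i^2 := by
  rw [Finset.mul_sum, Finset.mul_sum, ← Finset.sum_add_distrib, ← Finset.sum_add_distrib]
  apply Finset.sum_congr rfl; intro i _; ring

/-- Core lemma (sharp): under RIP of order K+1 with δ < 1/√(K+1), for a nonzero
vector u supported in T with |T| ≤ K and i ∉ T, some column in T has strictly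
larger correlation with A u than column i does. -/
lemma core_lemma {m n K : ℕ} (A : Matrix (Fin m) (Fin n) ℝ) (δ : ℝ)
    (hδ0 : 0 ≤ δ) (hδlt1 : δ < 1) (hδ : δ < 1 / Real.sqrt ((K : ℝ) + 1))
    (hRIP : RIP A (K + 1) δ) (T : Finset (Fin n)) (hT : T.card ≤ K)
    (u : Fin n → ℝ) (hsupp : sparseSupport u ⊆ T) (hu : u ≠ 0)
    (i : Fin n) (hi : i ∉ T) :
    ∃ j ∈ T, |(Aᵀ.mulVec (A.mulVec u)) i| < |(Aᵀ.mulVec (A.mulVec u)) j| := by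
  by_contra hcon
  push_neg at hcon
  set c : Fin n → ℝ := Aᵀ.mulVec (A.mulVec u) with hc
  -- basic quantities
  set ν : ℝ := ∑ j, u j ^ 2 with hνdef
  set ρ : ℝ := ∑ i', (A.mulVec u) i' ^ 2 with hρdef
  have huz : ∀ j, j ∉ T → u j = 0 := by
    intro j hj
    by_contra h0
    exact hj (hsupp (mem_sparseSupport.mpr h0))
  have hν : 0 < ν := by
    obtain ⟨j, hj⟩ : ∃ j, u j ≠ 0 := Function.ne_iff.mp hu
    apply Finset.sum_pos' (fun k _ => sq_nonneg _) ⟨j, Finset.mem_univ j, by positivity⟩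
  have hcardu : (sparseSupport u).card ≤ K + 1 :=
    le_trans (Finset.card_le_card hsupp) (le_trans hT (Nat.le_succ K))
  have hρl : (1 - δ) * ν ≤ ρ := (hRIP u hcardu).1
  have hρu : ρ ≤ (1 + δ) * ν := (hRIP u hcardu).2
  set U : Finset (Fin n) := insert i T with hU
  have hTU : T ⊆ U := Finset.subset_insert i T
  have hUcard : (U.card : ℝ) ≤ (K : ℝ) + 1 := by
    have := Finset.card_insert_le i T
    have : U.card ≤ K + 1 := le_trans this (Nat.succ_le_succ hT)
    exact_mod_cast this
  have huzU : ∀ j, j ∉ U → u j = 0 := fun j hj => huz j (fun h => hj (hTU h))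
  -- sums over U
  have hsum_uc : ∑ j ∈ U, u j * c j = ρ := by
    have h1 : ∑ j, u j * c j = ρ := by
      rw [hc, dot_mulVec_eq]
      apply Finset.sum_congr rfl; intro k _; ring
    rw [← h1]
    apply Finset.sum_subset (Finset.subset_univ U)
    intro j _ hj; rw [huzU j hj]; ring
  have hsum_u2 : ∑ j ∈ U, u j ^ 2 = ν := by
    rw [hνdef]
    apply Finset.sum_subset (Finset.subset_univ U)
    intro j _ hj; rw [huzU j hj]; ring
  -- the auxiliary vector g
  classical
  set g : Fin n → ℝ := fun j => if j ∈ U then c j - u j else 0 with hg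
  set R : ℝ := ∑ j ∈ U, (c j - u j) ^ 2 with hR
  have hR0 : 0 ≤ R := Finset.sum_nonneg (fun j _ => sq_nonneg _)
  have hgval : ∀ j ∈ U, g j = c j - u j := by
    intro j hj
    show (if j ∈ U then c j - u j else 0) = c j - u j
    rw [if_pos hj]
  have hgzero : ∀ j, j ∉ U → g j = 0 := by
    intro j hj
    show (if j ∈ U then c j - u j else 0) = 0
    rw [if_neg hj]
  have huniv : ∀ (f : Fin n → ℝ), (∀ j, j ∉ U → f j = 0) →
      ∑ j, f j = ∑ j ∈ U, f j := fun f hf =>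
    (Finset.sum_subset (Finset.subset_univ U) (fun j _ hj => hf j hj)).symm
  have hRg : ∑ j, g j ^ 2 = R := by
    have h2 : ∑ j, g j ^ 2 = ∑ j ∈ U, g j ^ 2 :=
      huniv _ (fun j hj => by rw [hgzero j hj]; ring)
    rw [h2, hR]
    exact Finset.sum_congr rfl (fun j hj => by rw [hgval j hj])
  have hgu : ∑ j, g j * u j = ρ - ν := by
    have h2 : ∑ j, g j * u j = ∑ j ∈ U, g j * u j :=
      huniv _ (fun j hj => by rw [hgzero j hj]; ring)
    rw [h2]
    have h3 : ∑ j ∈ U, g j * u j = ∑ j ∈ U, (u j * c j - u j ^ 2) :=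
      Finset.sum_congr rfl (fun j hj => by rw [hgval j hj]; ring)
    rw [h3, Finset.sum_sub_distrib, hsum_uc, hsum_u2]
  have hgc : ∑ j, g j * c j = R + (ρ - ν) := by
    have h2 : ∑ j, g j * c j = ∑ j ∈ U, g j * c j :=
      huniv _ (fun j hj => by rw [hgzero j hj]; ring)
    rw [h2]
    have h3 : ∑ j ∈ U, g j * c j = ∑ j ∈ U, ((c j - u j) ^ 2 + (u j * c j - u j ^ 2)) :=
      Finset.sum_congr rfl (fun j hj => by rw [hgval j hj]; ring)
    rw [h3, Finset.sum_add_distrib, Finset.sum_sub_distrib, hsum_uc, hsum_u2, hR]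
  -- sparsity of vectors supported in U
  have hUKn : U.card ≤ K + 1 := le_trans (Finset.card_insert_le i T) (Nat.succ_le_succ hT)
  have hsparse : ∀ v : Fin n → ℝ, (∀ j, j ∉ U → v j = 0) →
      (sparseSupport v).card ≤ K + 1 := by
    intro v hv
    refine le_trans (Finset.card_le_card ?_) hUKn
    intro j hj
    by_contra hjU
    exact (mem_sparseSupport.mp hj) (hv j hjU)
  -- auxiliary quantities for the polarization bound
  set P : ℝ := ∑ i', (A.mulVec g) i' ^ 2 with hP
  set X : ℝ := ∑ i', (A.mulVec g) i' * (A.mulVec u) i' with hXdef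
  have hX : X = R + (ρ - ν) := by
    rw [hXdef, ← dot_mulVec_eq A g (A.mulVec u), ← hc, hgc]
  -- polarization inequality for every β
  have hpm : ∀ β : ℝ, 4*β*X ≤ 4*β*(ρ - ν) + 2*δ*R + 2*δ*β^2*ν := by
    intro β
    have hplus := (hRIP (g + β • u) (hsparse _ (fun j hj => by
      simp [hgzero j hj, huzU j hj]))).2
    have hminus := (hRIP (g + (-β) • u) (hsparse _ (fun j hj => by
      simp [hgzero j hj, huzU j hj]))).1
    have hmv : ∀ γ : ℝ, A.mulVec (g + γ • u) = fun i' => (A.mulVec g) i' + γ * (A.mulVec u) i' := by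
      intro γ
      funext i'
      rw [Matrix.mulVec_add, Matrix.mulVec_smul]
      simp [smul_eq_mul]
    have hAp : ∑ i', (A.mulVec (g + β • u)) i' ^ 2 = P + 2*β*X + β^2*ρ := by
      rw [hmv β]; exact expand_sq Finset.univ (A.mulVec g) (A.mulVec u) β
    have hAm : ∑ i', (A.mulVec (g + (-β) • u)) i' ^ 2 = P + 2*(-β)*X + (-β)^2*ρ := by
      rw [hmv (-β)]; exact expand_sq Finset.univ (A.mulVec g) (A.mulVec u) (-β)
    have hvp : ∑ j, (g + β • u) j ^ 2 = R + 2*β*(ρ - ν) + β^2*ν := by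
      have : ∑ j, (g + β • u) j ^ 2 = ∑ j, (g j + β * u j) ^ 2 := by
        apply Finset.sum_congr rfl; intro j _; simp [smul_eq_mul]
      rw [this, expand_sq Finset.univ g u β, hRg, hgu]
    have hvm : ∑ j, (g + (-β) • u) j ^ 2 = R + 2*(-β)*(ρ - ν) + (-β)^2*ν := by
      have : ∑ j, (g + (-β) • u) j ^ 2 = ∑ j, (g j + (-β) * u j) ^ 2 := by
        apply Finset.sum_congr rfl; intro j _; simp [smul_eq_mul]
      rw [this, expand_sq Finset.univ g u (-β), hRg, hgu]
    rw [hAp, hvp] at hplus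
    rw [hAm, hvm] at hminus
    linarith only [hplus, hminus]
  clear_value g P X c
  -- the key bound R ≤ δ²ν
  have hF2 : R ≤ δ^2 * ν := by
    rcases eq_or_lt_of_le hδ0 with h0 | hpos
    · subst h0
      have h1 := hpm 1
      rw [hX] at h1
      linarith only [h1]
    · have h1 := hpm δ
      rw [hX] at h1
      have h2 : δ * R ≤ δ * (δ^2 * ν) := by linarith only [h1]
      exact le_of_mul_le_mul_left h2 hpos
  -- decomposition with a and q
  set a : ℝ := (ρ - ν)/ν with hadef
  have haν : a * ν = ρ - ν := div_mul_cancel₀ _ hν.ne'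
  clear_value a
  clear_value ν ρ R
  have h1a : (1+a) * ν = ρ := by linarith only [haν]
  have ha2 : a^2 ≤ δ^2 := by
    have h1 : -(δ*ν) ≤ a*ν := by rw [haν]; linarith only [hρl]
    have h2 : a*ν ≤ δ*ν := by rw [haν]; linarith only [hρu]
    have h3 := sq_le_sq' h1 h2
    have h4 : a^2 * ν^2 ≤ δ^2 * ν^2 := by linarith only [h3, sq_nonneg ν]
    exact le_of_mul_le_mul_right h4 (by positivity)
  set q : Fin n → ℝ := fun j => c j - (1+a) * u j with hq
  set Q : ℝ := ∑ j ∈ U, q j ^ 2 with hQdef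
  have hQ0 : 0 ≤ Q := Finset.sum_nonneg (fun j _ => sq_nonneg _)
  have hqval : ∀ j, q j = c j - (1+a) * u j := fun j => rfl
  have hqu : ∑ j ∈ U, q j * u j = 0 := by
    have h3 : ∑ j ∈ U, q j * u j = ∑ j ∈ U, (u j * c j - (1+a) * u j ^ 2) :=
      Finset.sum_congr rfl (fun j _ => by rw [hqval j]; ring)
    rw [h3, Finset.sum_sub_distrib, hsum_uc, ← Finset.mul_sum, hsum_u2, h1a, sub_self]
  have hRd : R = Q + 2*a*0 + a^2*ν := by
    have h3 : R = ∑ j ∈ U, (q j + a * u j) ^ 2 := by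
      rw [hR]
      exact Finset.sum_congr rfl (fun j _ => by rw [hqval j]; ring_nf)
    rw [h3, expand_sq U q u a, ← hQdef, hsum_u2, hqu]
  have hQle : Q ≤ (δ^2 - a^2) * ν := by linarith only [hRd, hF2]
  set W : ℝ := ∑ j ∈ U, c j ^ 2 with hWdef
  have hW : W = Q + 2*(1+a)*0 + (1+a)^2*ν := by
    have h3 : W = ∑ j ∈ U, (q j + (1+a) * u j) ^ 2 := by
      rw [hWdef]
      exact Finset.sum_congr rfl (fun j _ => by rw [hqval j]; ring_nf)
    rw [h3, expand_sq U q u (1+a), ← hQdef, hsum_u2, hqu]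
  have hciq : c i = q i := by rw [hqval i, huz i hi]; ring
  have hciQ : c i ^ 2 ≤ Q := by
    rw [hciq, hQdef]
    exact Finset.single_le_sum (fun j _ => sq_nonneg (q j)) (Finset.mem_insert_self i T)
  have hδ2lt : δ^2 < 1 := by
    calc δ^2 = δ*δ := sq δ
      _ ≤ 1*δ := mul_le_mul_of_nonneg_right hδlt1.le hδ0
      _ < 1 := by rw [one_mul]; exact hδlt1
  have hq1 : (1-δ^2) * Q ≤ (1-δ^2) * ((δ^2-a^2)*ν) :=
    mul_le_mul_of_nonneg_left hQle (by linarith)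
  have hW2 : δ^2 * W = δ^2*Q + δ^2*((1+a)^2*ν) := by rw [hW]; ring
  have hkey : c i ^ 2 ≤ δ^2 * W := by
    linarith only [hciQ, hq1, hW2, mul_nonneg hν.le (sq_nonneg (a + δ^2)), hδ2lt, hQ0]
  have hterm : ∀ j ∈ U, c j ^ 2 ≤ c i ^ 2 := by
    intro j hj
    rcases Finset.mem_insert.mp hj with h | h
    · rw [h]
    · calc c j ^ 2 = |c j| ^ 2 := (sq_abs _).symm
        _ ≤ |c i| ^ 2 := by
            apply pow_le_pow_left₀ (abs_nonneg _) (hcon j h)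
        _ = c i ^ 2 := sq_abs _
  have hWK : W ≤ ((K:ℝ)+1) * c i ^ 2 := by
    have h4 := Finset.sum_le_card_nsmul U (fun j => c j ^ 2) (c i ^ 2) hterm
    rw [nsmul_eq_mul] at h4
    calc W ≤ (U.card : ℝ) * c i ^ 2 := h4
      _ ≤ ((K:ℝ)+1) * c i ^ 2 := by
          apply mul_le_mul_of_nonneg_right hUcard (sq_nonneg _)
  have hne0 : c i ≠ 0 := by
    intro h0
    have hcj0 : ∀ j ∈ U, c j = 0 := by
      intro j hj
      have h5 := hterm j hj
      rw [h0] at h5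
      have h6 : c j ^ 2 = 0 := le_antisymm (by linarith only [h5]) (sq_nonneg _)
      exact (pow_eq_zero_iff two_ne_zero).mp h6
    have hρ0 : ρ = 0 := by
      rw [← hsum_uc]
      exact Finset.sum_eq_zero (fun j hj => by rw [hcj0 j hj]; ring)
    have h7 : 0 < (1-δ)*ν := mul_pos (by linarith only [hδlt1]) hν
    linarith only [h7, hρl, hρ0]
  have hciPos : 0 < c i ^ 2 := pow_two_pos_of_ne_zero hne0
  have hδK : δ^2 * ((K:ℝ)+1) < 1 := by
    have hKpos : (0:ℝ) < (K:ℝ) + 1 := by positivity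
    have hs : 0 < Real.sqrt ((K:ℝ)+1) := Real.sqrt_pos.mpr hKpos
    have h6 : δ * Real.sqrt ((K:ℝ)+1) < 1 := (lt_div_iff₀ hs).mp hδ
    have h7 := Real.sq_sqrt hKpos.le
    have h8 : δ*Real.sqrt ((K:ℝ)+1)*(δ*Real.sqrt ((K:ℝ)+1)) ≤ δ*Real.sqrt ((K:ℝ)+1)*1 :=
      mul_le_mul_of_nonneg_left h6.le (mul_nonneg hδ0 hs.le)
    have h9 : δ^2*((K:ℝ)+1) = (δ*Real.sqrt ((K:ℝ)+1))^2 := by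
      rw [mul_pow, h7]
    linarith only [h8, h9, h6]
  have h10 := mul_le_mul_of_nonneg_left hWK (sq_nonneg δ)
  have h11 := mul_lt_mul_of_pos_right hδK hciPos
  linarith only [hkey, h10, h11]

noncomputable def extendVec {n : ℕ} (S : Finset (Fin n)) (z : {j // j ∈ S} → ℝ) :
    Fin n → ℝ :=
  fun i => if h : i ∈ S then z ⟨i, h⟩ else 0

lemma extendVec_zero {n : ℕ} (S : Finset (Fin n)) (z : {j // j ∈ S} → ℝ)
    {j : Fin n} (hj : j ∉ S) : extendVec S z j = 0 := dif_neg hj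

lemma extendVec_mem {n : ℕ} (S : Finset (Fin n)) (z : {j // j ∈ S} → ℝ)
    (x : {j // j ∈ S}) : extendVec S z x.1 = z x := by
  rw [extendVec, dif_pos x.2]

lemma colSub_mulVec {m n : ℕ} (A : Matrix (Fin m) (Fin n) ℝ) (S : Finset (Fin n))
    (z : {j // j ∈ S} → ℝ) :
    (colSub A S).mulVec z = A.mulVec (extendVec S z) := by
  funext i
  show ∑ x : {j // j ∈ S}, colSub A S i x * z x = ∑ j, A i j * extendVec S z j
  calc ∑ x : {j // j ∈ S}, colSub A S i x * z x
      = ∑ x : {j // j ∈ S}, (fun j => A i j * extendVec S z j) x.1 := by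
        apply Finset.sum_congr rfl
        intro x _
        show colSub A S i x * z x = A i x.1 * extendVec S z x.1
        rw [extendVec_mem S z x]
        rfl
    _ = ∑ j ∈ S, A i j * extendVec S z j :=
        Finset.sum_coe_sort S (fun j => A i j * extendVec S z j)
    _ = ∑ j, A i j * extendVec S z j := by
        apply Finset.sum_subset (Finset.subset_univ S)
        intro j _ hj
        rw [extendVec_zero S z hj]; ring

lemma transpose_colSub_mulVec {m n : ℕ} (A : Matrix (Fin m) (Fin n) ℝ)
    (S : Finset (Fin n)) (w : Fin m → ℝ) (x : {j // j ∈ S}) :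
    ((colSub A S)ᵀ.mulVec w) x = (Aᵀ.mulVec w) x.1 := rfl

lemma gram_isUnit_s2 {m n K : ℕ} (A : Matrix (Fin m) (Fin n) ℝ) (δ : ℝ)
    (hδlt1 : δ < 1) (hRIP : RIP A (K + 1) δ) (S : Finset (Fin n))
    (hcard : S.card ≤ K + 1) :
    IsUnit ((colSub A S)ᵀ * colSub A S).det := by
  have hpd : ((colSub A S)ᵀ * colSub A S).PosDef := by
    refine Matrix.posDef_iff_dotProduct_mulVec.mpr ?_
    constructor
    · show ((colSub A S)ᵀ * colSub A S)ᴴ = _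
      ext a b
      simp [Matrix.conjTranspose_apply, Matrix.mul_apply, Matrix.transpose_apply, mul_comm]
    · intro z hz
      simp only [star_trivial]
      have h1 : z ⬝ᵥ ((colSub A S)ᵀ * colSub A S) *ᵥ z
          = (colSub A S *ᵥ z) ⬝ᵥ (colSub A S *ᵥ z) := by
        rw [← Matrix.mulVec_mulVec, Matrix.dotProduct_mulVec, Matrix.vecMul_transpose]
      rw [h1, colSub_mulVec]
      have hsupp : (sparseSupport (extendVec S z)).card ≤ K + 1 := by
        refine le_trans (Finset.card_le_card ?_) hcard
        intro j hj
        by_contra hjS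
        exact (mem_sparseSupport.mp hj) (extendVec_zero S z hjS)
      have hlow := (hRIP (extendVec S z) hsupp).1
      have hpos : 0 < ∑ j, extendVec S z j ^ 2 := by
        obtain ⟨x, hx⟩ : ∃ x, z x ≠ 0 := Function.ne_iff.mp hz
        refine Finset.sum_pos' (fun k _ => sq_nonneg _) ⟨x.1, Finset.mem_univ _, ?_⟩
        rw [extendVec_mem S z x]
        positivity
      have h2 : (A *ᵥ extendVec S z) ⬝ᵥ (A *ᵥ extendVec S z)
          = ∑ i, (A *ᵥ extendVec S z) i ^ 2 := by
        rw [dotProduct]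
        exact Finset.sum_congr rfl (fun i _ => (sq ((A *ᵥ extendVec S z) i)).symm)
      rw [h2]
      nlinarith [hlow, hpos]
  exact isUnit_iff_ne_zero.mpr hpd.det_pos.ne'

lemma residual_repr {m n K : ℕ} (A : Matrix (Fin m) (Fin n) ℝ) (δ : ℝ)
    (hδlt1 : δ < 1) (hRIP : RIP A (K + 1) δ) (S : Finset (Fin n))
    (hcard : S.card ≤ K + 1) (y : Fin m → ℝ) :
    ∃ w : Fin n → ℝ, (∀ j, j ∉ S → w j = 0) ∧
      (projPerp A S).mulVec y = y - A.mulVec w ∧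
      (∀ j ∈ S, (Aᵀ.mulVec ((projPerp A S).mulVec y)) j = 0) := by
  set B := colSub A S with hB
  set G := Bᵀ * B with hG
  have hdet : IsUnit G.det := gram_isUnit_s2 A δ hδlt1 hRIP S hcard
  set coef := G⁻¹ *ᵥ (Bᵀ *ᵥ y) with hcoef
  refine ⟨extendVec S coef, fun j hj => extendVec_zero S coef hj, ?_, ?_⟩
  · show (1 - B * G⁻¹ * Bᵀ) *ᵥ y = y - A *ᵥ extendVec S coef
    rw [Matrix.sub_mulVec, Matrix.one_mulVec, ← colSub_mulVec, ← hB]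
    congr 1
    rw [← Matrix.mulVec_mulVec, ← Matrix.mulVec_mulVec]
  · intro j hj
    have horth : Bᵀ *ᵥ ((projPerp A S) *ᵥ y) = 0 := by
      show Bᵀ *ᵥ ((1 - B * G⁻¹ * Bᵀ) *ᵥ y) = 0
      rw [Matrix.sub_mulVec, Matrix.one_mulVec, Matrix.mulVec_sub]
      rw [← Matrix.mulVec_mulVec, ← Matrix.mulVec_mulVec, Matrix.mulVec_mulVec (G⁻¹ *ᵥ (Bᵀ *ᵥ y)) Bᵀ B, ← hG, Matrix.mulVec_mulVec, Matrix.mul_nonsing_inv G hdet, Matrix.one_mulVec, sub_self]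
    have := congrFun horth ⟨j, hj⟩
    rw [transpose_colSub_mulVec] at this
    exact this

/-- Corollary 1 (noise-free case): under `δ_{K+1} < 1/√(K+1)`, OMP exactly
recovers the `K`-sparse signal `x` in `|Ω| ≤ K` iterations: `S_{|Ω|} = Ω`,
`r^{|Ω|} = 0`, and the least-squares estimate supported on `S_{|Ω|}` equals `x`. -/
theorem omp_exact_recovery_noiseless {m n K : ℕ} (hK : 1 ≤ K)
    (A : Matrix (Fin m) (Fin n) ℝ) (x : Fin n → ℝ) (δ : ℝ)
    (hδ0 : 0 ≤ δ) (hδlt1 : δ < 1)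
    (hδ : δ < 1 / Real.sqrt ((K : ℝ) + 1))
    (hRIP : RIP A (K + 1) δ)
    (hx : (sparseSupport x).card ≤ K)
    (hne : (sparseSupport x).Nonempty)
    (y : Fin m → ℝ) (hy : y = A.mulVec x)
    (s : ℕ → Fin n) (S : ℕ → Finset (Fin n)) (r : ℕ → Fin m → ℝ)
    (hS0 : S 0 = ∅)
    (hSk : ∀ k, S (k + 1) = S k ∪ {s (k + 1)})
    (hr : ∀ k, r k = (projPerp A (S k)).mulVec y)
    (hsel : ∀ k, ∀ i : Fin n,
      |(Aᵀ.mulVec (r k)) i| ≤ |(Aᵀ.mulVec (r k)) (s (k + 1))|) :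
    S (sparseSupport x).card = sparseSupport x ∧
    r (sparseSupport x).card = 0 ∧
    ∀ xh : Fin n → ℝ, sparseSupport xh ⊆ S (sparseSupport x).card →
      (∀ z : Fin n → ℝ, sparseSupport z ⊆ S (sparseSupport x).card →
        l2norm (y - A.mulVec xh) ≤ l2norm (y - A.mulVec z)) →
      xh = x := by
  set Ω := sparseSupport x with hΩ
  -- the invariant: after k ≤ |Ω| steps, S k ⊆ Ω with exactly k elements
  have hinv : ∀ k, k ≤ Ω.card → S k ⊆ Ω ∧ (S k).card = k := by
    intro k
    induction k with
    | zero => intro _; rw [hS0]; exact ⟨Finset.empty_subset _, Finset.card_empty⟩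
    | succ k ih =>
      intro hk1
      obtain ⟨hsub, hcard⟩ := ih (Nat.le_of_succ_le hk1)
      have hScard : (S k).card ≤ K + 1 := by
        rw [hcard]
        exact le_trans (le_trans (Nat.le_of_succ_le hk1) hx) (Nat.le_succ K)
      obtain ⟨w, hw0, hrepr, horth⟩ := residual_repr A δ hδlt1 hRIP (S k) hScard y
      set u : Fin n → ℝ := x - w with hu_def
      have hru : r k = A.mulVec u := by
        rw [hr k, hrepr, hy, hu_def, Matrix.mulVec_sub]
      have hsuppu0 : ∀ j, j ∉ Ω → u j = 0 := by
        intro j hj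
        have hxj : x j = 0 := by
          by_contra h
          exact hj (mem_sparseSupport.mpr h)
        have hwj : w j = 0 := hw0 j (fun hjS => hj (hsub hjS))
        show x j - w j = 0
        rw [hxj, hwj, sub_zero]
      have hsuppu : sparseSupport u ⊆ Ω := by
        intro j hj
        by_contra hjΩ
        exact (mem_sparseSupport.mp hj) (hsuppu0 j hjΩ)
      obtain ⟨j0, hj0Ω, hj0S⟩ : ∃ j0 ∈ Ω, j0 ∉ S k := by
        have hne' : S k ≠ Ω := by
          intro he
          rw [he] at hcard
          omega
        exact Finset.exists_of_ssubset (hsub.ssubset_of_ne hne')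
      have hu : u ≠ 0 := by
        intro h0
        have h1 : u j0 = 0 := congrFun h0 j0
        have h2 : w j0 = 0 := hw0 j0 hj0S
        have h3 : x j0 ≠ 0 := mem_sparseSupport.mp hj0Ω
        apply h3
        have : x j0 - w j0 = 0 := h1
        rw [h2, sub_zero] at this
        exact this
      have hcAu : Aᵀ.mulVec (r k) = Aᵀ.mulVec (A.mulVec u) := by rw [hru]
      have horthS : ∀ j ∈ S k, (Aᵀ.mulVec (r k)) j = 0 := by
        intro j hj
        rw [hr k]
        exact horth j hj
      have hν : 0 < ∑ j, u j ^ 2 := by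
        obtain ⟨j, hj⟩ : ∃ j, u j ≠ 0 := Function.ne_iff.mp hu
        exact Finset.sum_pos' (fun k' _ => sq_nonneg _) ⟨j, Finset.mem_univ j, by positivity⟩
      have hcards : (sparseSupport u).card ≤ K + 1 :=
        le_trans (Finset.card_le_card hsuppu) (hx.trans (Nat.le_succ K))
      have hiΩ : s (k+1) ∈ Ω := by
        by_contra hiΩ
        obtain ⟨j, hjΩ, hlt⟩ := core_lemma A δ hδ0 hδlt1 hδ hRIP Ω hx u hsuppu hu _ hiΩ
        have hle := hsel k j
        rw [hcAu] at hle
        exact absurd hle (not_le.mpr hlt)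
      have hiS : s (k+1) ∉ S k := by
        intro hiS
        have hci0 : (Aᵀ.mulVec (r k)) (s (k+1)) = 0 := horthS _ hiS
        have hall : ∀ j, (Aᵀ.mulVec (r k)) j = 0 := by
          intro j
          have := hsel k j
          rw [hci0, abs_zero] at this
          exact abs_nonpos_iff.mp this
        have hρ : ∑ i', (A.mulVec u) i' ^ 2 = 0 := by
          have h2 := dot_mulVec_eq A u (r k)
          have h3 : ∑ j, u j * (Aᵀ.mulVec (r k)) j = 0 :=
            Finset.sum_eq_zero (fun j _ => by rw [hall j]; ring)
          rw [h3] at h2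
          have h4 : ∑ i', (A.mulVec u) i' * (r k) i' = ∑ i', (A.mulVec u) i' ^ 2 := by
            rw [hru]
            exact Finset.sum_congr rfl (fun i' _ => (sq _).symm)
          rw [h4] at h2
          exact h2.symm
        have hlow := (hRIP u hcards).1
        have h5 : 0 < (1-δ) * ∑ j, u j ^ 2 := mul_pos (by linarith only [hδlt1]) hν
        rw [hρ] at hlow
        linarith only [h5, hlow]
      constructor
      · rw [hSk k]
        exact Finset.union_subset hsub (Finset.singleton_subset_iff.mpr hiΩ)
      · rw [hSk k, Finset.union_comm, ← Finset.insert_eq, Finset.card_insert_of_notMem hiS, hcard]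
  obtain ⟨hsub, hcard⟩ := hinv Ω.card le_rfl
  have hSΩ : S Ω.card = Ω := Finset.eq_of_subset_of_card_le hsub (by rw [hcard])
  have hScard : (S Ω.card).card ≤ K + 1 := by
    rw [hcard]
    exact hx.trans (Nat.le_succ K)
  have hr0 : r Ω.card = 0 := by
    obtain ⟨w, hw0, hrepr, horth⟩ := residual_repr A δ hδlt1 hRIP (S Ω.card) hScard y
    set u : Fin n → ℝ := x - w with hu_def
    have hru : r Ω.card = A.mulVec u := by
      rw [hr _, hrepr, hy, hu_def, Matrix.mulVec_sub]
    have hsuppu0 : ∀ j, j ∉ Ω → u j = 0 := by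
      intro j hj
      have hxj : x j = 0 := by
        by_contra h
        exact hj (mem_sparseSupport.mpr h)
      have hwj : w j = 0 := hw0 j (by rw [hSΩ]; exact hj)
      show x j - w j = 0
      rw [hxj, hwj, sub_zero]
    have hsq : ∑ i', (r Ω.card) i' ^ 2 = 0 := by
      have h2 := dot_mulVec_eq A u (r Ω.card)
      have h3 : ∑ j, u j * (Aᵀ.mulVec (r Ω.card)) j = 0 := by
        apply Finset.sum_eq_zero
        intro j _
        by_cases hj : j ∈ Ω
        · have : (Aᵀ.mulVec (r Ω.card)) j = 0 := by
            rw [hr _]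
            exact horth j (by rw [hSΩ]; exact hj)
          rw [this]; ring
        · rw [hsuppu0 j hj]; ring
      rw [h3] at h2
      have h4 : ∑ i', (A.mulVec u) i' * (r Ω.card) i' = ∑ i', (r Ω.card) i' ^ 2 := by
        rw [hru]
        exact Finset.sum_congr rfl (fun i' _ => (sq _).symm)
      rw [h4] at h2
      exact h2.symm
    funext i'
    have h5 : ∀ j ∈ Finset.univ, (0:ℝ) ≤ (r Ω.card) j ^ 2 := fun j _ => sq_nonneg _
    have h6 := (Finset.sum_eq_zero_iff_of_nonneg h5).mp hsq i' (Finset.mem_univ i')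
    exact (pow_eq_zero_iff two_ne_zero).mp h6
  refine ⟨hSΩ, hr0, ?_⟩
  intro xh hsuppxh hmin
  have hxmem : sparseSupport x ⊆ S Ω.card := by rw [hSΩ]
  have h1 := hmin x hxmem
  have h2 : y - A.mulVec x = 0 := by rw [hy, sub_self]
  rw [h2] at h1
  have h3 : l2norm (0 : Fin m → ℝ) = 0 := by simp [l2norm]
  rw [h3] at h1
  have h4 : l2norm (y - A.mulVec xh) = 0 :=
    le_antisymm h1 (Real.sqrt_nonneg _)
  have h5 : ∑ i', (y - A.mulVec xh) i' ^ 2 = 0 := by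
    have h6 : 0 ≤ ∑ i', (y - A.mulVec xh) i' ^ 2 :=
      Finset.sum_nonneg (fun i' _ => sq_nonneg _)
    have h4' : Real.sqrt (∑ i', (y - A.mulVec xh) i' ^ 2) = 0 := h4
    have h7 := Real.sqrt_eq_zero'.mp h4'
    linarith only [h6, h7]
  have hAxh : A.mulVec xh = y := by
    funext i'
    have h8 : ∀ j ∈ Finset.univ, (0:ℝ) ≤ (y - A.mulVec xh) j ^ 2 := fun j _ => sq_nonneg _
    have h9 := (Finset.sum_eq_zero_iff_of_nonneg h8).mp h5 i' (Finset.mem_univ i')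
    have h10 := (pow_eq_zero_iff two_ne_zero).mp h9
    have : y i' - (A.mulVec xh) i' = 0 := h10
    linarith only [this]
  have hd : A.mulVec (xh - x) = 0 := by
    rw [Matrix.mulVec_sub, hAxh, hy, sub_self]
  have hsuppd : (sparseSupport (xh - x)).card ≤ K + 1 := by
    have hs1 : sparseSupport (xh - x) ⊆ Ω := by
      intro j hj
      have hjne : xh j - x j ≠ 0 := mem_sparseSupport.mp hj
      by_contra hjΩ
      have hxj : x j = 0 := by
        by_contra h
        exact hjΩ (mem_sparseSupport.mpr h)
      have hxhj : xh j = 0 := by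
        by_contra h
        exact hjΩ (by rw [← hSΩ] at hjΩ ⊢; exact hsuppxh (mem_sparseSupport.mpr h))
      apply hjne
      rw [hxj, hxhj, sub_zero]
    exact le_trans (Finset.card_le_card hs1) (hx.trans (Nat.le_succ K))
  have hlow := (hRIP (xh - x) hsuppd).1
  have hz : ∑ i', (A.mulVec (xh - x)) i' ^ 2 = 0 := by
    rw [hd]
    simp
  rw [hz] at hlow
  have hnn : 0 ≤ ∑ j, (xh - x) j ^ 2 := Finset.sum_nonneg (fun j _ => sq_nonneg _)
  have hzero : ∑ j, (xh - x) j ^ 2 = 0 := by nlinarith [hlow, hnn, hδlt1]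
  funext j
  have h8 : ∀ j' ∈ Finset.univ, (0:ℝ) ≤ (xh - x) j' ^ 2 := fun j' _ => sq_nonneg _
  have h9 := (Finset.sum_eq_zero_iff_of_nonneg h8).mp hzero j (Finset.mem_univ j)
  have h10 : xh j - x j = 0 := (pow_eq_zero_iff two_ne_zero).mp h9
  linarith only [h10]
end
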